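/- arXiv:1012.1451 — 3 statements merged into one kernel-verified Lean document; each statement's English description precedes it below -/
import Mathlib

section
/- Let L be a finite graded lattice of rank n whose proper part has nonzero (n-2)-nd reduced homology over k. For all integers 0 ≤ r ≤ k ≤ n and every order ideal I of L \ {1̂} generated by at most r elements, there exist at least binom(n-r, k-r) good elements of L of rank k that do not belong to I. -/
set_option maxSynthPendingDepth 2

open Finset

variable {α : Type*}

/-- A `j`-vertex simplex of the order complex of `s ⊆ α`: a strictly increasing
`j`-tuple of elements of `s` (for `j = 0` this is the unique empty simplex). -/
def OrderedSimplex [Preorder α] (s : Set α) (j : ℕ) : Type _ :=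
  {f : Fin j → α // StrictMono f ∧ ∀ i, f i ∈ s}

/-- The module of simplicial chains with `j` vertices (i.e. of degree `j - 1`)
of the order complex of `s`, with coefficients in `K`.  Since degree `j = 0`
corresponds to the empty simplex, this is the *augmented* chain complex. -/
abbrev SimpChains (K : Type*) [CommRing K] [Preorder α] (s : Set α) (j : ℕ) :=
  OrderedSimplex s j →₀ K

/-- The `i`-th face of a simplex (delete the `i`-th vertex). -/
def OrderedSimplex.face [Preorder α] {s : Set α} {j : ℕ}
    (σ : OrderedSimplex s (j + 1)) (i : Fin (j + 1)) : OrderedSimplex s j :=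
  ⟨σ.1 ∘ Fin.succAbove i, σ.2.1.comp (Fin.strictMono_succAbove i), fun _ => σ.2.2 _⟩

/-- The simplicial boundary map (for `j = 0` it is the augmentation). -/
noncomputable def simpBoundary (K : Type*) [CommRing K] [Preorder α] (s : Set α) (j : ℕ) :
    SimpChains K s (j + 1) →ₗ[K] SimpChains K s j :=
  Finsupp.lsum K fun σ => ∑ i : Fin (j + 1), ((-1 : K) ^ (i : ℕ)) • Finsupp.lsingle (σ.face i)

/-- Cycles with `j` vertices (for `j = 0` every chain is a cycle). -/
noncomputable def simpCycles (K : Type*) [CommRing K] [Preorder α] (s : Set α) :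
    (j : ℕ) → Submodule K (SimpChains K s j)
  | 0 => ⊤
  | (i + 1) => LinearMap.ker (simpBoundary K s i)

/-- Boundaries with `j` vertices. -/
noncomputable def simpBoundaries (K : Type*) [CommRing K] [Preorder α] (s : Set α) (j : ℕ) :
    Submodule K (SimpChains K s j) :=
  LinearMap.range (simpBoundary K s j)

/-- `ReducedHomology K s j` is the reduced simplicial homology group
`H̃_{j-1}(Δ(s); K)` of the order complex of `s` (the index `j` counts vertices,
so `j = 0` gives `H̃₋₁` and `j = n - 1` gives `H̃_{n-2}`). -/
noncomputable def ReducedHomology (K : Type*) [CommRing K] [Preorder α] (s : Set α) (j : ℕ) :=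
  ↥(simpCycles K s j) ⧸ (simpBoundaries K s j).comap (simpCycles K s j).subtype

noncomputable instance (K : Type*) [CommRing K] [Preorder α] (s : Set α) (j : ℕ) :
    AddCommGroup (ReducedHomology K s j) := by unfold ReducedHomology; infer_instance

noncomputable instance (K : Type*) [CommRing K] [Preorder α] (s : Set α) (j : ℕ) :
    Module K (ReducedHomology K s j) := by unfold ReducedHomology; infer_instance

/-- The proper part `L ∖ {⊥, ⊤}` of a bounded poset. -/
def properPart (α : Type*) [Preorder α] [BoundedOrder α] : Set α :=
  {x | x ≠ ⊥ ∧ x ≠ ⊤}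

/-- The flag `f`-vector entry `f_P(S)`: the number of chains in the proper part
of `P` whose set of ranks is exactly `S`. -/
noncomputable def flagf (α : Type*) [Preorder α] [BoundedOrder α] [GradeMinOrder ℕ α]
    (S : Finset ℕ) : ℕ :=
  Nat.card {C : Finset α // IsChain (· ≤ ·) (C : Set α) ∧ (↑C ⊆ properPart α) ∧
    C.image (grade ℕ) = S}

/-- The multinomial coefficient `α_n(S) = n! / (s₁!·(s₂-s₁)!⋯(n-s_l)!)`
for `S = {s₁ < s₂ < ⋯ < s_l} ⊆ [n-1]`; it equals `f_{B_n}(S)`. -/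
def alphaMulti (n : ℕ) (S : Finset ℕ) : ℕ :=
  n.factorial /
    ((S.sort (· ≤ ·) ++ [n]).zipWith (fun b a => (b - a).factorial)
      (0 :: S.sort (· ≤ ·))).prod

/-- An element `x` of a graded bounded poset is *good* if `x = ⊥` or the order
complex of the open interval `(⊥, x)` has nontrivial top reduced homology
`H̃_{ρ(x)-2}` over `K`. -/
def IsGoodElement (K : Type*) [CommRing K] [Preorder α] [OrderBot α] [GradeMinOrder ℕ α]
    (x : α) : Prop :=
  x = ⊥ ∨ Nontrivial (ReducedHomology K (Set.Ioo (⊥ : α) x) (grade ℕ x - 1))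

set_option linter.unusedSectionVars false
set_option maxHeartbeats 1000000

section Comb
variable {α : Type*} [Lattice α] [BoundedOrder α] [Fintype α] [GradeMinOrder ℕ α]

/-- squeeze -/
lemma eq_of_le_of_grade_le {x y : α} (hxy : x ≤ y) (h : grade ℕ y ≤ grade ℕ x) : x = y := by
  rcases lt_or_eq_of_le hxy with h' | h'
  · exact absurd (grade_strictMono h') (not_lt.2 h)
  · exact h'

lemma grade_bot' : grade ℕ (⊥ : α) = 0 := grade_bot

/-- A flag function below `t` of rank `m`: ranks `1,…,m-1` are filled. -/
def IsFlagFn (t : α) (m : ℕ) (f : ℕ → α) : Prop :=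
  (∀ j, 1 ≤ j → j < m → grade ℕ (f j) = j) ∧
  (∀ j, 1 ≤ j → j + 1 < m → f j < f (j + 1)) ∧
  (∀ j, 1 ≤ j → j < m → f j < t)

lemma IsFlagFn.mono {t : α} {m : ℕ} {f : ℕ → α} (hf : IsFlagFn t m f) :
    ∀ j j', 1 ≤ j → j < j' → j' < m → f j < f j' := by
  intro j j' h1 hjj
  induction j', hjj using Nat.le_induction with
  | base => intro h; exact hf.2.1 j h1 h
  | succ i hi ih =>
    intro h
    exact (ih (by omega)).trans (hf.2.1 i (by omega) h)

/-- Richness: a nonempty family of flags, with at least two choices in each line. -/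
def Rich (t : α) (m : ℕ) (M : Set (ℕ → α)) : Prop :=
  M.Nonempty ∧ (∀ f ∈ M, IsFlagFn t m f) ∧
  ∀ f ∈ M, ∀ j, 1 ≤ j → j < m → ∃ y, y ≠ f j ∧ Function.update f j y ∈ M

open Classical in
/-- The top-level elements of the family. -/
noncomputable def Dfin (m : ℕ) (M : Set (ℕ → α)) : Finset α :=
  Finset.univ.filter (fun c => ∃ f ∈ M, f (m-1) = c)

open Classical in
/-- The set of top-level elements above `x`. -/
noncomputable def Sbar (m : ℕ) (M : Set (ℕ → α)) (x : α) : Finset α :=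
  Finset.univ.filter (fun c => (∃ f ∈ M, f (m-1) = c) ∧ x ≤ c)

lemma mem_Sbar {m : ℕ} {M : Set (ℕ → α)} {x c : α} :
    c ∈ Sbar m M x ↔ (∃ f ∈ M, f (m-1) = c) ∧ x ≤ c := by
  classical
  simp [Sbar]

lemma Sbar_subset_Dfin {m : ℕ} {M : Set (ℕ → α)} {x : α} : Sbar m M x ⊆ Dfin m M := by
  classical
  intro c hc
  simp only [mem_Sbar] at hc
  simp [Dfin, hc.1]

lemma mem_Dfin {m : ℕ} {M : Set (ℕ → α)} {c : α} :
    c ∈ Dfin m M ↔ ∃ f ∈ M, f (m-1) = c := by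
  classical
  simp [Dfin]

variable {t : α} {m : ℕ} {M : Set (ℕ → α)}

lemma meet_aux (hR : Rich t m M) :
    ∀ d j (f : ℕ → α), f ∈ M → 1 ≤ j → j + d + 1 = m → f j = (Sbar m M (f j)).inf id := by
  classical
  intro d
  induction d with
  | zero =>
    intro j f hf h1 hjm
    refine le_antisymm (Finset.le_inf fun c hc => (mem_Sbar.1 hc).2) ?_
    have hmem : f j ∈ Sbar m M (f j) :=
      mem_Sbar.2 ⟨⟨f, hf, by congr 1; omega⟩, le_rfl⟩
    exact Finset.inf_le hmem
  | succ d ih =>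
    intro j f hf h1 hjm
    obtain ⟨y, hy, hy'⟩ := hR.2.2 f hf (j+1) (by omega) (by omega)
    have hflag := hR.2.1 f hf
    have hflag' := hR.2.1 _ hy'
    have hfj1 : f j < f (j+1) := hflag.2.1 j h1 (by omega)
    have hupj : Function.update f (j+1) y j = f j := Function.update_of_ne (by omega) _ _
    have hupj1 : Function.update f (j+1) y (j+1) = y := Function.update_self _ _ _
    have hfy : f j < y := by
      have := hflag'.2.1 j h1 (by omega)
      rwa [hupj, hupj1] at this
    have hgr1 : grade ℕ (f (j+1)) = j + 1 := hflag.1 (j+1) (by omega) (by omega)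
    have hgry : grade ℕ y = j + 1 := by
      have := hflag'.1 (j+1) (by omega) (by omega)
      rwa [hupj1] at this
    set w := f (j+1) ⊓ y with hw
    have hjw : f j ≤ w := le_inf hfj1.le hfy.le
    have hwlt : w < f (j+1) := by
      refine lt_of_le_of_ne inf_le_left ?_
      intro h
      have : f (j+1) ≤ y := by rw [← h]; exact inf_le_right
      exact hy (eq_of_le_of_grade_le this (by omega)).symm
    have hgrw : grade ℕ w ≤ j := by
      have h2 : grade ℕ w < grade ℕ (f (j+1)) := grade_strictMono hwlt
      omega
    have hfjw : f j = w := eq_of_le_of_grade_le hjw (by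
      have : grade ℕ (f j) = j := hflag.1 j h1 (by omega)
      omega)
    have ih1 : f (j+1) = (Sbar m M (f (j+1))).inf id := ih (j+1) f hf (by omega) (by omega)
    have ih2 : y = (Sbar m M y).inf id := by
      have := ih (j+1) _ hy' (by omega) (by omega)
      rwa [hupj1] at this
    have hsub : Sbar m M (f (j+1)) ∪ Sbar m M y ⊆ Sbar m M (f j) := by
      intro c hc
      rcases Finset.mem_union.1 hc with hc | hc <;>
        · rw [mem_Sbar] at hc ⊢
          exact ⟨hc.1, le_trans (by first | exact hfj1.le | exact hfy.le) hc.2⟩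
    have hkey : f j = ((Sbar m M (f (j+1)) ∪ Sbar m M y).inf id) := by
      rw [Finset.inf_union, ← ih1, ← ih2, ← hw, hfjw]
    refine le_antisymm (Finset.le_inf fun c hc => (mem_Sbar.1 hc).2) ?_
    calc (Sbar m M (f j)).inf id ≤ (Sbar m M (f (j+1)) ∪ Sbar m M y).inf id :=
          Finset.inf_mono hsub
      _ = f j := hkey.symm

lemma sbar_card (hR : Rich t m M) :
    ∀ d j (f : ℕ → α), f ∈ M → 1 ≤ j → j + d + 1 = m → d + 1 ≤ (Sbar m M (f j)).card := by
  classical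
  intro d
  induction d with
  | zero =>
    intro j f hf h1 hjm
    have hmem : f j ∈ Sbar m M (f j) :=
      mem_Sbar.2 ⟨⟨f, hf, by congr 1; omega⟩, le_rfl⟩
    exact Finset.card_pos.2 ⟨_, hmem⟩
  | succ d ih =>
    intro j f hf h1 hjm
    have hfj1 : f j < f (j+1) := (hR.2.1 f hf).2.1 j h1 (by omega)
    have hsub : Sbar m M (f (j+1)) ⊆ Sbar m M (f j) := by
      intro c hc
      rw [mem_Sbar] at hc ⊢
      exact ⟨hc.1, le_trans hfj1.le hc.2⟩
    have hne : Sbar m M (f (j+1)) ≠ Sbar m M (f j) := by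
      intro h
      have e1 : f j = (Sbar m M (f j)).inf id := meet_aux hR (d+1) j f hf h1 hjm
      have e2 : f (j+1) = (Sbar m M (f (j+1))).inf id := meet_aux hR d (j+1) f hf (by omega) (by omega)
      rw [h] at e2
      exact absurd (e1.trans e2.symm) hfj1.ne
    have := Finset.card_lt_card (ssubset_of_subset_of_ne hsub hne)
    have := ih (j+1) f hf (by omega) (by omega)
    omega

lemma dfin_card (hR : Rich t m M) (hm : 2 ≤ m) : m ≤ (Dfin m M).card := by
  classical
  obtain ⟨f, hf⟩ := hR.1
  obtain ⟨y, hy, hy'⟩ := hR.2.2 f hf 1 le_rfl (by omega)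
  have hup1 : Function.update f 1 y 1 = y := Function.update_self _ _ _
  rcases eq_or_lt_of_le hm with hm2 | hm3
  · -- m = 2
    have h1 : f 1 ∈ Dfin m M := mem_Dfin.2 ⟨f, hf, by congr 1; omega⟩
    have h2 : y ∈ Dfin m M := mem_Dfin.2 ⟨_, hy', by rw [show m - 1 = 1 by omega]; exact hup1⟩
    calc m = ({y, f 1} : Finset α).card := by rw [Finset.card_pair hy]; omega
      _ ≤ (Dfin m M).card := Finset.card_le_card (by
          intro c hc
          rcases Finset.mem_insert.1 hc with rfl | hc
          · exact h2
          · rw [Finset.mem_singleton.1 hc]; exact h1)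
  · -- 3 ≤ m
    have hA : m - 1 ≤ (Sbar m M (f 1)).card := by
      have := sbar_card hR (m - 2) 1 f hf le_rfl (by omega)
      omega
    have hB : m - 1 ≤ (Sbar m M y).card := by
      have := sbar_card hR (m - 2) 1 _ hy' le_rfl (by omega)
      rw [hup1] at this
      omega
    have hAB : Sbar m M (f 1) ≠ Sbar m M y := by
      intro h
      have e1 : f 1 = (Sbar m M (f 1)).inf id := meet_aux hR (m-2) 1 f hf le_rfl (by omega)
      have e2 : y = (Sbar m M y).inf id := by
        have := meet_aux hR (m-2) 1 _ hy' le_rfl (by omega)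
        rwa [hup1] at this
      rw [← h] at e2
      exact hy (e2.trans e1.symm)
    have hmain : ∀ (A B : Finset α), A ⊆ Dfin m M → B ⊆ Dfin m M →
        m - 1 ≤ A.card → m - 1 ≤ B.card → ¬ A ⊆ B → m ≤ (Dfin m M).card := by
      intro A B hAD hBD hcA hcB hnsub
      obtain ⟨a, haA, haB⟩ := Finset.not_subset.1 hnsub
      have : (insert a B).card ≤ (Dfin m M).card := Finset.card_le_card (by
        intro c hc
        rcases Finset.mem_insert.1 hc with rfl | hc
        · exact hAD haA
        · exact hBD hc)
      rw [Finset.card_insert_of_notMem haB] at this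
      omega
    by_cases hss : Sbar m M (f 1) ⊆ Sbar m M y
    · refine hmain (Sbar m M y) (Sbar m M (f 1)) Sbar_subset_Dfin Sbar_subset_Dfin hB hA ?_
      intro h
      exact hAB (Finset.Subset.antisymm hss h)
    · exact hmain (Sbar m M (f 1)) (Sbar m M y) Sbar_subset_Dfin Sbar_subset_Dfin hA hB hss

end Comb

section Count
variable {α : Type*} [Lattice α] [BoundedOrder α] [Fintype α] [GradeMinOrder ℕ α]

theorem comb_count : ∀ (N m : ℕ) (t : α), grade ℕ t = m →
    ∀ (M : Set (ℕ → α)), Rich t m M →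
    ∀ (P : α → Prop), (∀ f ∈ M, ∀ j, 1 ≤ j → j < m → P (f j)) → P ⊥ → P t →
    ∀ (r k : ℕ), r ≤ k → k ≤ m → m + (k - r) ≤ N →
    ∀ (G : Finset α), G.card ≤ r → (∀ g ∈ G, ¬ t ≤ g) →
    (m - r).choose (k - r) ≤
      ({x : α | grade ℕ x = k ∧ P x ∧ x ≤ t ∧ ∀ g ∈ G, ¬ x ≤ g}).ncard := by
  intro N
  induction N with
  | zero =>
    intro m t ht M hR P hP hPb hPt r k hrk hkm hN G hG hGt
    -- m = 0, k = 0, r = 0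
    have hm0 : m = 0 := by omega
    have hk0 : k = 0 := by omega
    have hr0 : r = 0 := by omega
    have hGe : G = ∅ := Finset.card_eq_zero.1 (by omega)
    subst hGe
    have hmem : t ∈ {x : α | grade ℕ x = k ∧ P x ∧ x ≤ t ∧ ∀ g ∈ (∅ : Finset α), ¬ x ≤ g} := by
      refine ⟨by omega, hPt, le_rfl, by simp⟩
    have := (Set.ncard_pos (Set.toFinite _)).2 ⟨t, hmem⟩
    have h1 : (m - r).choose (k - r) = 1 := by
      subst hm0 hk0 hr0; rfl
    omega
  | succ N ih =>
    intro m t ht M hR P hP hPb hPt r k hrk hkm hN G hG hGt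
    classical
    rcases eq_or_lt_of_le hkm with hkm' | hkm'
    · -- k = m : the element t works
      have hmem : t ∈ {x : α | grade ℕ x = k ∧ P x ∧ x ≤ t ∧ ∀ g ∈ G, ¬ x ≤ g} :=
        ⟨by omega, hPt, le_rfl, hGt⟩
      have hpos := (Set.ncard_pos (Set.toFinite _)).2 ⟨t, hmem⟩
      have h1 : (m - r).choose (k - r) = 1 := by
        rw [show m - r = k - r by omega, Nat.choose_self]
      omega
    · rcases Nat.eq_zero_or_pos k with hk0 | hk1
      · -- k = 0 (hence r = 0): the element ⊥ works
        have hr0 : r = 0 := by omega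
        have hGe : G = ∅ := Finset.card_eq_zero.1 (by omega)
        subst hGe
        have hmem : (⊥ : α) ∈ {x : α | grade ℕ x = k ∧ P x ∧ x ≤ t ∧
            ∀ g ∈ (∅ : Finset α), ¬ x ≤ g} := by
          refine ⟨by rw [grade_bot']; omega, hPb, bot_le, by simp⟩
        have hpos := (Set.ncard_pos (Set.toFinite _)).2 ⟨_, hmem⟩
        have h1 : (m - r).choose (k - r) = 1 := by
          rw [show k - r = 0 by omega, Nat.choose_zero_right]
        omega
      · -- 1 ≤ k < m
        have hm2 : 2 ≤ m := by omega
        have hDc := dfin_card hR hm2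
        -- find a top-level element c avoiding the ideal of G
        have hbadsub : (Dfin m M).filter (fun c => ∃ g ∈ G, c ≤ g) ⊆
            G.image (fun g => t ⊓ g) := by
          intro c hc
          have hmf := Finset.mem_filter.1 hc
          have hcD := hmf.1
          obtain ⟨g, hgG, hcg⟩ := hmf.2
          obtain ⟨f, hfM, hfc⟩ := mem_Dfin.1 hcD
          have hflag := hR.2.1 f hfM
          have hgc : grade ℕ c = m - 1 := by
            rw [← hfc]; exact hflag.1 (m-1) (by omega) (by omega)
          have hct : c < t := by
            rw [← hfc]; exact hflag.2.2 (m-1) (by omega) (by omega)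
          have htg : t ⊓ g < t := by
            refine lt_of_le_of_ne inf_le_left fun h => ?_
            exact hGt g hgG (inf_eq_left.1 h)
          have hgtg : grade ℕ (t ⊓ g) ≤ m - 1 := by
            have h2 : grade ℕ (t ⊓ g) < grade ℕ t := grade_strictMono htg
            omega
          have : c = t ⊓ g := eq_of_le_of_grade_le (le_inf hct.le hcg) (by omega)
          exact Finset.mem_image.2 ⟨g, hgG, this.symm⟩
        have hbadcard : ((Dfin m M).filter (fun c => ∃ g ∈ G, c ≤ g)).card < (Dfin m M).card := by
          have h1 := Finset.card_le_card hbadsub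
          have h2 := Finset.card_image_le (s := G) (f := fun g => t ⊓ g)
          omega
        obtain ⟨c, hcD, hcgood⟩ : ∃ c ∈ Dfin m M, ∀ g ∈ G, ¬ c ≤ g := by
          by_contra h
          push_neg at h
          have : Dfin m M ⊆ (Dfin m M).filter (fun c => ∃ g ∈ G, c ≤ g) := by
            intro c hc
            obtain ⟨g, hg, hg'⟩ := h c hc
            exact Finset.mem_filter.2 ⟨hc, g, hg, hg'⟩
          exact absurd (Finset.card_le_card this) (by omega)
        obtain ⟨f₀, hf₀M, hf₀c⟩ := mem_Dfin.1 hcD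
        have hflag₀ := hR.2.1 f₀ hf₀M
        have hgc : grade ℕ c = m - 1 := by
          rw [← hf₀c]; exact hflag₀.1 (m-1) (by omega) (by omega)
        have hct : c < t := by
          rw [← hf₀c]; exact hflag₀.2.2 (m-1) (by omega) (by omega)
        have hPc : P c := by
          rw [← hf₀c]; exact hP f₀ hf₀M (m-1) (by omega) (by omega)
        -- batch 1 : inside the interval [⊥, c]
        set Mc : Set (ℕ → α) := {f ∈ M | f (m-1) = c} with hMc
        have hRc : Rich c (m-1) Mc := by
          refine ⟨⟨f₀, hf₀M, hf₀c⟩, ?_, ?_⟩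
          · rintro f ⟨hfM, hfc⟩
            have hflag := hR.2.1 f hfM
            refine ⟨fun j h1 hj => hflag.1 j h1 (by omega),
              fun j h1 hj => hflag.2.1 j h1 (by omega), fun j h1 hj => ?_⟩
            rw [← hfc]
            exact hflag.mono j (m-1) h1 (by omega) (by omega)
          · rintro f ⟨hfM, hfc⟩ j h1 hj
            obtain ⟨y, hy, hy'⟩ := hR.2.2 f hfM j h1 (by omega)
            refine ⟨y, hy, hy', ?_⟩
            rw [Function.update_of_ne (by omega) _ _]
            exact hfc
        have hPMc : ∀ f ∈ Mc, ∀ j, 1 ≤ j → j < m - 1 → P (f j) := by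
          rintro f ⟨hfM, hfc⟩ j h1 hj
          exact hP f hfM j h1 (by omega)
        set Gc : Finset α := G.image (fun g => c ⊓ g) with hGc
        have hGtc : ∀ g' ∈ Gc, ¬ c ≤ g' := by
          intro g' hg'
          obtain ⟨g, hgG, rfl⟩ := Finset.mem_image.1 hg'
          intro hle
          exact hcgood g hgG (hle.trans inf_le_right)
        have IH1 := ih (m-1) c hgc Mc hRc P hPMc hPb hPc r k hrk (by omega) (by omega)
          Gc (le_trans Finset.card_image_le hG) hGtc
        have hS1T : {x : α | grade ℕ x = k ∧ P x ∧ x ≤ c ∧ ∀ g' ∈ Gc, ¬ x ≤ g'} ⊆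
            {x : α | grade ℕ x = k ∧ P x ∧ x ≤ t ∧ ∀ g ∈ G, ¬ x ≤ g} := by
          rintro x ⟨hx1, hx2, hx3, hx4⟩
          refine ⟨hx1, hx2, hx3.trans hct.le, fun g hg hle => ?_⟩
          exact hx4 (c ⊓ g) (Finset.mem_image.2 ⟨g, hg, rfl⟩) (le_inf hx3 hle)
        rcases eq_or_lt_of_le hrk with hrk' | hrk'
        · -- r = k : batch 1 alone suffices
          have h0 : k - r = 0 := by omega
          rw [h0] at IH1 ⊢
          calc (m - r).choose 0 = (m - 1 - r).choose 0 := by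
                rw [Nat.choose_zero_right, Nat.choose_zero_right]
            _ ≤ _ := IH1.trans (Set.ncard_le_ncard hS1T (Set.toFinite _))
        · -- r < k : also use batch 2
          have IH2 := ih m t ht M hR P hP hPb hPt (r+1) k (by omega) hkm (by omega)
            (insert c G) (le_trans (Finset.card_insert_le _ _) (by omega)) ?_
          swap
          · intro g hg
            rcases Finset.mem_insert.1 hg with rfl | hg
            · exact fun h => lt_irrefl _ (lt_of_lt_of_le hct h)
            · exact hGt g hg
          have hS2T : {x : α | grade ℕ x = k ∧ P x ∧ x ≤ t ∧ ∀ g ∈ insert c G, ¬ x ≤ g} ⊆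
              {x : α | grade ℕ x = k ∧ P x ∧ x ≤ t ∧ ∀ g ∈ G, ¬ x ≤ g} := by
            rintro x ⟨hx1, hx2, hx3, hx4⟩
            exact ⟨hx1, hx2, hx3, fun g hg => hx4 g (Finset.mem_insert_of_mem hg)⟩
          have hdisj : Disjoint
              {x : α | grade ℕ x = k ∧ P x ∧ x ≤ c ∧ ∀ g' ∈ Gc, ¬ x ≤ g'}
              {x : α | grade ℕ x = k ∧ P x ∧ x ≤ t ∧ ∀ g ∈ insert c G, ¬ x ≤ g} := by
            rw [Set.disjoint_left]
            rintro x ⟨hx1, hx2, hx3, hx4⟩ ⟨hy1, hy2, hy3, hy4⟩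
            exact hy4 c (Finset.mem_insert_self _ _) hx3
          have hunion := Set.ncard_union_eq hdisj (Set.toFinite _) (Set.toFinite _)
          have hUT : {x : α | grade ℕ x = k ∧ P x ∧ x ≤ c ∧ ∀ g' ∈ Gc, ¬ x ≤ g'} ∪
              {x : α | grade ℕ x = k ∧ P x ∧ x ≤ t ∧ ∀ g ∈ insert c G, ¬ x ≤ g} ⊆
              {x : α | grade ℕ x = k ∧ P x ∧ x ≤ t ∧ ∀ g ∈ G, ¬ x ≤ g} :=
            Set.union_subset hS1T hS2T
          have hle := Set.ncard_le_ncard hUT (Set.toFinite _)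
          have harith : (m - r).choose (k - r) =
              (m - 1 - r).choose (k - r) + (m - (r+1)).choose (k - (r+1)) := by
            rw [show k - (r+1) = k - 1 - r by omega, show m - (r+1) = m - 1 - r by omega,
              show m - r = (m - 1 - r) + 1 by omega, show k - r = (k - 1 - r) + 1 by omega,
              Nat.choose_succ_succ']
            omega
          omega

end Count

section Generic
variable {α : Type*} [Lattice α] [BoundedOrder α] [Fintype α] [GradeMinOrder ℕ α]
variable {K : Type*} [Field K]

attribute [local instance] Classical.propDecidable

lemma coe_succAbove {m : ℕ} (i : Fin (m+1)) (j : Fin m) :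
    ((i.succAbove j) : ℕ) = if (j:ℕ) < (i:ℕ) then (j:ℕ) else (j:ℕ)+1 := by
  rw [Fin.succAbove]
  split_ifs with h1 h2 h3
  · rfl
  · exact absurd ((Fin.castSucc_lt_iff_succ_le).1 h1) (by
      simp only [Fin.le_def, Fin.val_succ] at *
      omega)
  · exact absurd h3 (by
      simp only [Fin.lt_def, Fin.coe_castSucc] at h1
      omega)
  · rfl

/-- simplices whose grades are `1,2,…` -/
def FullFlags {s : Set α} {j : ℕ} (σ : OrderedSimplex s j) : Prop :=
  ∀ i : Fin j, grade ℕ (σ.1 i) = (i:ℕ) + 1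

/-- simplices whose grades are `1,…,l, l+2,…` (rank `l+1` missing) -/
def PatternAt {s : Set α} {j : ℕ} (ψ : OrderedSimplex s j) (l : ℕ) : Prop :=
  ∀ p : Fin j, grade ℕ (ψ.1 p) = if (p:ℕ) < l then (p:ℕ)+1 else (p:ℕ)+2

lemma boundary_apply {s : Set α} {m : ℕ} (zz : SimpChains K s (m+1))
    (ψ : OrderedSimplex s m) :
    (simpBoundary K s m zz) ψ = ∑ σ ∈ zz.support, zz σ *
      (∑ i : Fin (m+1), (-1:K)^(i:ℕ) * (if σ.face i = ψ then 1 else 0)) := by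
  classical
  rw [simpBoundary, Finsupp.lsum_apply, Finsupp.sum, Finsupp.finset_sum_apply]
  refine Finset.sum_congr rfl fun σ hσ => ?_
  rw [LinearMap.sum_apply, Finsupp.finset_sum_apply, Finset.mul_sum]
  refine Finset.sum_congr rfl fun i _ => ?_
  rw [LinearMap.smul_apply, Finsupp.lsingle_apply, Finsupp.smul_apply,
    Finsupp.single_apply]
  split_ifs with h
  · rw [smul_eq_mul]; ring
  · rw [smul_eq_mul]; ring

lemma pattern_of_face {s : Set α} {m : ℕ} {σ : OrderedSimplex s (m+1)}
    (hσ : FullFlags σ) (i : Fin (m+1)) : PatternAt (σ.face i) (i:ℕ) := by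
  intro p
  have : (σ.face i).1 p = σ.1 (i.succAbove p) := rfl
  rw [this, hσ (i.succAbove p), coe_succAbove]
  split_ifs <;> omega

lemma face_index_eq {s : Set α} {m : ℕ} {σ : OrderedSimplex s (m+1)}
    (hσ : FullFlags σ) {ψ : OrderedSimplex s m} {l : ℕ} (hl : l ≤ m)
    (hpat : PatternAt ψ l) {i : Fin (m+1)} (hface : σ.face i = ψ) : (i:ℕ) = l := by
  by_contra hne
  have key : ∀ p : Fin m, grade ℕ ((σ.face i).1 p) = grade ℕ (ψ.1 p) := by
    intro p; rw [hface]
  set p0 : Fin m := ⟨min (i:ℕ) l, by omega⟩ with hp0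
  have h1 := pattern_of_face hσ i p0
  have h2 := hpat p0
  rw [key p0, h2] at h1
  have hp0v : (p0:ℕ) = min (i:ℕ) l := rfl
  split_ifs at h1 <;> omega

lemma eval_line {s : Set α} {m : ℕ} {zz : SimpChains K s (m+1)}
    (hful : ∀ σ ∈ zz.support, FullFlags σ) (ψ : OrderedSimplex s m)
    {l : ℕ} (hl : l ≤ m) (hpat : PatternAt ψ l) :
    (simpBoundary K s m zz) ψ = (-1:K)^l *
      ∑ σ ∈ zz.support.filter (fun σ => σ.face ⟨l, by omega⟩ = ψ), zz σ := by
  rw [boundary_apply, Finset.sum_filter, Finset.mul_sum]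
  refine Finset.sum_congr rfl fun σ hσ => ?_
  have hσf := hful σ hσ
  have hsingle : (∑ i : Fin (m+1), (-1:K)^(i:ℕ) * (if σ.face i = ψ then 1 else 0)) =
      (-1:K)^((⟨l, by omega⟩ : Fin (m+1)):ℕ) *
        (if σ.face ⟨l, by omega⟩ = ψ then 1 else 0) := by
    refine Finset.sum_eq_single _ ?_ ?_
    · intro i _ hne
      rw [if_neg, mul_zero]
      intro hface
      exact hne (Fin.ext ((face_index_eq hσf hl hpat hface)))
    · intro h
      exact absurd (Finset.mem_univ _) h
  rw [hsingle]
  split_ifs with h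
  · ring
  · ring

lemma line_sum_zero {s : Set α} {m : ℕ} {zz : SimpChains K s (m+1)}
    (hcyc : simpBoundary K s m zz = 0)
    (hful : ∀ σ ∈ zz.support, FullFlags σ) (ψ : OrderedSimplex s m)
    {l : ℕ} (hl : l ≤ m) (hpat : PatternAt ψ l) :
    ∑ σ ∈ zz.support.filter (fun σ => σ.face ⟨l, by omega⟩ = ψ), zz σ = 0 := by
  have h := eval_line hful ψ hl hpat
  rw [hcyc] at h
  simp only [Finsupp.coe_zero, Pi.zero_apply] at h
  rcases mul_eq_zero.1 h.symm with h' | h'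
  · exact absurd h' (pow_ne_zero _ (neg_ne_zero.2 one_ne_zero))
  · exact h'

lemma vanish_line {s : Set α} {m : ℕ} {zz : SimpChains K s (m+1)}
    (hful : ∀ σ ∈ zz.support, FullFlags σ) (ψ : OrderedSimplex s m)
    (hnopat : ∀ l, l ≤ m → ¬ PatternAt ψ l) :
    (simpBoundary K s m zz) ψ = 0 := by
  rw [boundary_apply]
  refine Finset.sum_eq_zero fun σ hσ => ?_
  have : (∑ i : Fin (m+1), (-1:K)^(i:ℕ) * (if σ.face i = ψ then 1 else 0)) = 0 := by
    refine Finset.sum_eq_zero fun i _ => ?_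
    rw [if_neg, mul_zero]
    intro hface
    exact hnopat (i:ℕ) (by omega) (hface ▸ pattern_of_face (hful σ hσ) i)
  rw [this, mul_zero]

/-- From a nonzero coefficient and a zero line sum, get a second simplex on the line. -/
lemma exists_exchange {s : Set α} {m : ℕ} {zz : SimpChains K s (m+1)}
    (hcyc : simpBoundary K s m zz = 0)
    (hful : ∀ σ ∈ zz.support, FullFlags σ)
    {σ₀ : OrderedSimplex s (m+1)} (hσ₀ : σ₀ ∈ zz.support) (i₀ : Fin (m+1)) :
    ∃ σ₁ ∈ zz.support, σ₁.1 i₀ ≠ σ₀.1 i₀ ∧ ∀ j, j ≠ i₀ → σ₁.1 j = σ₀.1 j := by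
  have hpat := pattern_of_face (hful σ₀ hσ₀) i₀
  have hzero : ∑ σ ∈ zz.support.filter (fun σ => σ.face i₀ = σ₀.face i₀), zz σ = 0 :=
    line_sum_zero hcyc hful (σ₀.face i₀) (by omega) hpat
  have hmem : σ₀ ∈ zz.support.filter (fun σ => σ.face i₀ = σ₀.face i₀) :=
    Finset.mem_filter.2 ⟨hσ₀, rfl⟩
  obtain ⟨σ₁, hσ₁mem, hσ₁ne⟩ : ∃ σ₁ ∈ zz.support.filter
      (fun σ => σ.face i₀ = σ₀.face i₀), σ₁ ≠ σ₀ := by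
    by_contra h
    push_neg at h
    have hsub : zz.support.filter (fun σ => σ.face i₀ = σ₀.face i₀) = {σ₀} := by
      apply Finset.Subset.antisymm
      · intro σ hσ; exact Finset.mem_singleton.2 (h σ hσ)
      · intro σ hσ; rw [Finset.mem_singleton.1 hσ]; exact hmem
    rw [hsub, Finset.sum_singleton] at hzero
    exact (Finsupp.mem_support_iff.1 hσ₀) hzero
  have hσ₁supp := (Finset.mem_filter.1 hσ₁mem).1
  have hσ₁face : σ₁.face i₀ = σ₀.face i₀ := (Finset.mem_filter.1 hσ₁mem).2
  have hoff : ∀ j, j ≠ i₀ → σ₁.1 j = σ₀.1 j := by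
    intro j hj
    obtain ⟨j', hj'⟩ := Fin.exists_succAbove_eq hj
    have h1 : σ₁.1 (i₀.succAbove j') = (σ₁.face i₀).1 j' := rfl
    have h2 : (σ₀.face i₀).1 j' = σ₀.1 (i₀.succAbove j') := rfl
    rw [← hj', h1, hσ₁face, h2]
  refine ⟨σ₁, hσ₁supp, ?_, hoff⟩
  intro h
  apply hσ₁ne
  apply Subtype.ext
  funext j
  by_cases hj : j = i₀
  · rw [hj]; exact h
  · exact hoff j hj

end Generic

section Apply
variable {α : Type*} [Lattice α] [BoundedOrder α] [Fintype α] [GradeMinOrder ℕ α]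
variable {K : Type*} [Field K]

attribute [local instance] Classical.propDecidable

/-- extensionality for ordered simplices -/
lemma OrderedSimplex.exten {s : Set α} {j : ℕ} {σ τ : OrderedSimplex s j}
    (h : ∀ p, σ.1 p = τ.1 p) : σ = τ := Subtype.ext (funext h)

lemma OrderedSimplex.apply_val {s : Set α} {j : ℕ} (σ : OrderedSimplex s j) {p q : Fin j}
    (h : (p:ℕ) = (q:ℕ)) : σ.1 p = σ.1 q := congrArg σ.1 (Fin.ext h)

/-- lower bound on grades along a simplex avoiding `⊥` -/
lemma grade_lower {s : Set α} (hs : ∀ y ∈ s, y ≠ ⊥) {j : ℕ} (τ : OrderedSimplex s j) :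
    ∀ p (h : p < j), p + 1 ≤ grade ℕ (τ.1 ⟨p, h⟩) := by
  intro p
  induction p with
  | zero =>
    intro h
    have hb : (⊥ : α) < τ.1 ⟨0, h⟩ := bot_lt_iff_ne_bot.2 (hs _ (τ.2.2 _))
    have h2 : grade ℕ (⊥:α) < grade ℕ (τ.1 ⟨0, h⟩) := grade_strictMono hb
    rw [grade_bot'] at h2
    omega
  | succ p ih =>
    intro h
    have h1 := ih (by omega)
    have h2 : τ.1 ⟨p, by omega⟩ < τ.1 ⟨p+1, h⟩ := τ.2.1 (by simp [Fin.lt_def])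
    have h3 : grade ℕ (τ.1 ⟨p, by omega⟩) < grade ℕ (τ.1 ⟨p+1, h⟩) := grade_strictMono h2
    omega

/-- every (N+1)-vertex simplex on the proper part of a rank N+2 lattice is a full flag -/
lemma properPart_full {N : ℕ} (hrank : grade ℕ (⊤ : α) = N + 2)
    (σ : OrderedSimplex (properPart α) (N+1)) : FullFlags σ := by
  have hupper : ∀ d p (h : p < N + 1), p + d = N → grade ℕ (σ.1 ⟨p, h⟩) ≤ p + 1 := by
    intro d
    induction d with
    | zero =>
      intro p h hp
      have ht : σ.1 ⟨p, h⟩ < ⊤ := lt_top_iff_ne_top.2 (σ.2.2 _).2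
      have h3 : grade ℕ (σ.1 ⟨p, h⟩) < grade ℕ (⊤:α) := grade_strictMono ht
      omega
    | succ d ih =>
      intro p h hp
      have h1 := ih (p+1) (by omega) (by omega)
      have h2 : σ.1 ⟨p, h⟩ < σ.1 ⟨p+1, by omega⟩ := σ.2.1 (by simp [Fin.lt_def])
      have h3 : grade ℕ (σ.1 ⟨p, h⟩) < grade ℕ (σ.1 ⟨p+1, by omega⟩) := grade_strictMono h2
      omega
  intro i
  have hl := grade_lower (fun y hy => hy.1) σ i.val i.isLt
  have hu := hupper (N - i.val) i.val i.isLt (by omega)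
  have : σ.1 ⟨i.val, i.isLt⟩ = σ.1 i := OrderedSimplex.apply_val σ rfl
  rw [this] at hl hu
  omega

/-- the function-encoding of a flag simplex -/
noncomputable def toFn {N : ℕ} (σ : OrderedSimplex (properPart α) (N+1)) : ℕ → α :=
  fun j => if h : 1 ≤ j ∧ j ≤ N + 1 then σ.1 ⟨j-1, by omega⟩ else ⊥

lemma rich_of_cycle {N : ℕ} (hrank : grade ℕ (⊤ : α) = N + 2)
    (z : SimpChains K (properPart α) (N+1)) (hz0 : z ≠ 0)
    (hcyc : simpBoundary K (properPart α) N z = 0) :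
    Rich (⊤ : α) (N+2) (toFn '' (z.support : Set (OrderedSimplex (properPart α) (N+1)))) := by
  have hful : ∀ σ ∈ z.support, FullFlags σ := fun σ _ => properPart_full hrank σ
  refine ⟨?_, ?_, ?_⟩
  · obtain ⟨σ, hσ⟩ := Finsupp.support_nonempty_iff.2 hz0
    exact ⟨toFn σ, Set.mem_image_of_mem _ hσ⟩
  · rintro f ⟨σ, hσ, rfl⟩
    refine ⟨fun j h1 hj => ?_, fun j h1 hj => ?_, fun j h1 hj => ?_⟩
    · have h2 : grade ℕ (σ.1 ⟨j-1, by omega⟩) = (j-1)+1 := properPart_full hrank σ _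
      rw [toFn, dif_pos ⟨h1, by omega⟩, h2]
      omega
    · simp only [toFn]
      rw [dif_pos (⟨h1, by omega⟩ : 1 ≤ j ∧ j ≤ N+1),
        dif_pos (⟨by omega, by omega⟩ : 1 ≤ j+1 ∧ j+1 ≤ N+1)]
      exact σ.2.1 (by simp only [Fin.lt_def]; omega)
    · rw [toFn, dif_pos ⟨h1, by omega⟩]
      exact lt_top_iff_ne_top.2 (σ.2.2 _).2
  · rintro f ⟨σ, hσ, rfl⟩ j h1 hj
    set i₀ : Fin (N+1) := ⟨j-1, by omega⟩ with hi₀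
    obtain ⟨σ₁, hσ₁supp, hσ₁ne, hσ₁off⟩ := exists_exchange hcyc hful hσ i₀
    refine ⟨σ₁.1 i₀, ?_, ?_⟩
    · rw [toFn, dif_pos ⟨h1, by omega⟩]
      exact hσ₁ne
    · refine ⟨σ₁, hσ₁supp, ?_⟩
      funext j'
      by_cases hj' : j' = j
      · subst hj'
        rw [Function.update_self]
        simp only [toFn]
        rw [dif_pos (⟨h1, by omega⟩ : 1 ≤ j' ∧ j' ≤ N+1)]
      · rw [Function.update_of_ne hj']
        simp only [toFn]
        by_cases hr : 1 ≤ j' ∧ j' ≤ N + 1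
        · rw [dif_pos hr, dif_pos hr]
          refine hσ₁off _ ?_
          intro h
          apply hj'
          have h2 : j' - 1 = j - 1 := by
            have := congrArg Fin.val h
            simpa using this
          omega
        · rw [dif_neg hr, dif_neg hr]

end Apply
section Good
variable {α : Type*} [Lattice α] [BoundedOrder α] [Fintype α] [GradeMinOrder ℕ α]
variable {K : Type*} [Field K]

attribute [local instance] Classical.propDecidable

variable {N : ℕ} (σ₀ : OrderedSimplex (properPart α) (N+1)) (i₀ : Fin (N+1))

/-- glue a lower simplex with the tail of `σ₀` -/
def glueLow {iv : ℕ} (hiv : (i₀:ℕ) = iv)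
    (τ : OrderedSimplex (Set.Ioo (⊥:α) (σ₀.1 i₀)) iv) :
    OrderedSimplex (properPart α) (N+1) := by
  refine ⟨fun p => if h : (p:ℕ) < iv then τ.1 ⟨(p:ℕ), h⟩ else σ₀.1 p, ?_, ?_⟩
  · intro p q hpq
    have hpq' : (p:ℕ) < (q:ℕ) := hpq
    dsimp only
    split_ifs with hp hq hq
    · exact τ.2.1 (show (⟨(p:ℕ), hp⟩ : Fin iv) < ⟨(q:ℕ), hq⟩ from hpq')
    · exact lt_of_lt_of_le (τ.2.2 ⟨(p:ℕ), hp⟩).2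
        (σ₀.2.1.monotone (show i₀ ≤ q from by rw [Fin.le_def]; omega))
    · omega
    · exact σ₀.2.1 hpq
  · intro p
    dsimp only
    split_ifs with hp
    · refine ⟨?_, ?_⟩
      · exact ne_of_gt (τ.2.2 ⟨(p:ℕ), hp⟩).1
      · intro h
        have h2 := (τ.2.2 ⟨(p:ℕ), hp⟩).2
        rw [h] at h2
        exact absurd h2 not_top_lt
    · exact σ₀.2.2 p

lemma glueLow_apply_lt {iv : ℕ} (hiv : (i₀:ℕ) = iv)
    (τ : OrderedSimplex (Set.Ioo (⊥:α) (σ₀.1 i₀)) iv) (p : Fin (N+1)) (h : (p:ℕ) < iv) :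
    (glueLow σ₀ i₀ hiv τ).1 p = τ.1 ⟨(p:ℕ), h⟩ := dif_pos h

lemma glueLow_apply_ge {iv : ℕ} (hiv : (i₀:ℕ) = iv)
    (τ : OrderedSimplex (Set.Ioo (⊥:α) (σ₀.1 i₀)) iv) (p : Fin (N+1)) (h : ¬ (p:ℕ) < iv) :
    (glueLow σ₀ i₀ hiv τ).1 p = σ₀.1 p := dif_neg h

lemma glueLow_inj {iv : ℕ} (hiv : (i₀:ℕ) = iv) :
    Function.Injective (glueLow σ₀ i₀ hiv) := by
  intro τ τ' h
  apply OrderedSimplex.exten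
  intro j
  have hjN : (j:ℕ) < N + 1 := by have := j.2; omega
  have h1 := congrArg (fun σ : OrderedSimplex (properPart α) (N+1) => σ.1 ⟨(j:ℕ), hjN⟩) h
  have h1 : (glueLow σ₀ i₀ hiv τ).1 ⟨(j:ℕ), hjN⟩ = (glueLow σ₀ i₀ hiv τ').1 ⟨(j:ℕ), hjN⟩ := h1
  rw [glueLow_apply_lt σ₀ i₀ hiv τ _ j.2, glueLow_apply_lt σ₀ i₀ hiv τ' _ j.2] at h1
  calc τ.1 j = τ.1 ⟨(j:ℕ), j.2⟩ := OrderedSimplex.apply_val τ rfl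
    _ = τ'.1 ⟨(j:ℕ), j.2⟩ := h1
    _ = τ'.1 j := OrderedSimplex.apply_val τ' rfl

/-- the lower part of a simplex agreeing with `σ₀` at position `i₀` -/
def lowPart {iv : ℕ} (hiv : (i₀:ℕ) = iv) (σ : OrderedSimplex (properPart α) (N+1))
    (heq : σ.1 i₀ = σ₀.1 i₀) : OrderedSimplex (Set.Ioo (⊥:α) (σ₀.1 i₀)) iv := by
  refine ⟨fun j => σ.1 ⟨(j:ℕ), lt_trans (hiv ▸ j.2) i₀.2⟩, ?_, ?_⟩
  · intro p q hpq
    exact σ.2.1 (show (⟨(p:ℕ),_⟩ : Fin (N+1)) < ⟨(q:ℕ),_⟩ from hpq)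
  · intro j
    refine ⟨bot_lt_iff_ne_bot.2 (σ.2.2 _).1, ?_⟩
    rw [← heq]
    refine σ.2.1 (show (⟨(j:ℕ),_⟩ : Fin (N+1)) < i₀ from ?_)
    exact (show (j:ℕ) < (i₀:ℕ) from by have := j.2; omega)

lemma glueLow_lowPart {iv : ℕ} (hiv : (i₀:ℕ) = iv) (σ : OrderedSimplex (properPart α) (N+1))
    (heq : σ.1 i₀ = σ₀.1 i₀) (htail : ∀ p : Fin (N+1), ¬ (p:ℕ) < iv → σ.1 p = σ₀.1 p) :
    glueLow σ₀ i₀ hiv (lowPart σ₀ i₀ hiv σ heq) = σ := by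
  apply OrderedSimplex.exten
  intro p
  by_cases hp : (p:ℕ) < iv
  · rw [glueLow_apply_lt σ₀ i₀ hiv _ p hp]
    exact (OrderedSimplex.apply_val σ rfl : σ.1 ⟨(p:ℕ),_⟩ = σ.1 p)
  · rw [glueLow_apply_ge σ₀ i₀ hiv _ p hp]
    exact (htail p hp).symm

/-- glue a lower face with the tail of `σ₀` -/
def glueFace {d : ℕ} (hiv : (i₀:ℕ) = d + 1)
    (τ' : OrderedSimplex (Set.Ioo (⊥:α) (σ₀.1 i₀)) d) :
    OrderedSimplex (properPart α) N := by
  refine ⟨fun p => if h : (p:ℕ) < d then τ'.1 ⟨(p:ℕ), h⟩ else σ₀.1 p.succ, ?_, ?_⟩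
  · intro p q hpq
    have hpq' : (p:ℕ) < (q:ℕ) := hpq
    dsimp only
    split_ifs with hp hq hq
    · exact τ'.2.1 (show (⟨(p:ℕ), hp⟩ : Fin d) < ⟨(q:ℕ), hq⟩ from hpq')
    · refine lt_of_lt_of_le (τ'.2.2 ⟨(p:ℕ), hp⟩).2 (σ₀.2.1.monotone ?_)
      rw [Fin.le_def, Fin.val_succ]
      omega
    · omega
    · exact σ₀.2.1 (show p.succ < q.succ from by
        rw [Fin.lt_def, Fin.val_succ, Fin.val_succ]; omega)
  · intro p
    dsimp only
    split_ifs with hp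
    · refine ⟨ne_of_gt (τ'.2.2 ⟨(p:ℕ), hp⟩).1, ?_⟩
      intro h
      have h2 := (τ'.2.2 ⟨(p:ℕ), hp⟩).2
      rw [h] at h2
      exact absurd h2 not_top_lt
    · exact σ₀.2.2 p.succ

lemma glueFace_pattern (hrank : grade ℕ (⊤ : α) = N + 2) {d : ℕ} (hiv : (i₀:ℕ) = d + 1)
    (τ' : OrderedSimplex (Set.Ioo (⊥:α) (σ₀.1 i₀)) d) {l : ℕ} (hl : l ≤ d)
    (hpat : PatternAt τ' l) : PatternAt (glueFace σ₀ i₀ hiv τ') l := by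
  intro p
  show grade ℕ (if h : (p:ℕ) < d then τ'.1 ⟨(p:ℕ), h⟩ else σ₀.1 p.succ) = _
  by_cases hp : (p:ℕ) < d
  · rw [dif_pos hp]
    have h1 := hpat ⟨(p:ℕ), hp⟩
    simpa using h1
  · rw [dif_neg hp]
    have h2 : grade ℕ (σ₀.1 p.succ) = (p:ℕ) + 2 := by
      have h3 := properPart_full hrank σ₀ p.succ
      rw [h3, Fin.val_succ]
    rw [h2, if_neg (by omega)]

end Good
section Cyc
variable {α : Type*} [Lattice α] [BoundedOrder α] [Fintype α] [GradeMinOrder ℕ α]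
variable {K : Type*} [Field K]

attribute [local instance] Classical.propDecidable

variable {N : ℕ}

lemma coe_succAbove_mk {m l : ℕ} (hl : l < m+1) (p : Fin m) :
    (((⟨l, hl⟩ : Fin (m+1)).succAbove p) : ℕ) = if (p:ℕ) < l then (p:ℕ) else (p:ℕ)+1 :=
  coe_succAbove _ _

lemma face_apply {s : Set α} {j : ℕ} (σ : OrderedSimplex s (j+1)) (i : Fin (j+1)) (p : Fin j) :
    (σ.face i).1 p = σ.1 (i.succAbove p) := rfl

lemma glueFace_apply_lt (σ₀ : OrderedSimplex (properPart α) (N+1)) (i₀ : Fin (N+1))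
    {d : ℕ} (hiv : (i₀:ℕ) = d + 1) (τ' : OrderedSimplex (Set.Ioo (⊥:α) (σ₀.1 i₀)) d)
    (p : Fin N) (h : (p:ℕ) < d) :
    (glueFace σ₀ i₀ hiv τ').1 p = τ'.1 ⟨(p:ℕ), h⟩ := dif_pos h

lemma glueFace_apply_ge (σ₀ : OrderedSimplex (properPart α) (N+1)) (i₀ : Fin (N+1))
    {d : ℕ} (hiv : (i₀:ℕ) = d + 1) (τ' : OrderedSimplex (Set.Ioo (⊥:α) (σ₀.1 i₀)) d)
    (p : Fin N) (h : ¬ (p:ℕ) < d) :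
    (glueFace σ₀ i₀ hiv τ').1 p = σ₀.1 p.succ := dif_neg h

/-- face-compatibility of the gluing -/
lemma glueLow_face (σ₀ : OrderedSimplex (properPart α) (N+1)) (i₀ : Fin (N+1))
    {d : ℕ} (hiv : (i₀:ℕ) = d + 1)
    (τ : OrderedSimplex (Set.Ioo (⊥:α) (σ₀.1 i₀)) (d+1))
    (τ' : OrderedSimplex (Set.Ioo (⊥:α) (σ₀.1 i₀)) d)
    {l : ℕ} (hl : l ≤ d) (hlf : l < N+1) (hld : l < d+1)
    (hface : τ.face ⟨l, hld⟩ = τ') :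
    (glueLow σ₀ i₀ hiv τ).face ⟨l, hlf⟩ = glueFace σ₀ i₀ hiv τ' := by
  have hdN : d + 1 ≤ N := by have := i₀.2; omega
  apply OrderedSimplex.exten
  intro p
  rw [face_apply]
  set q : Fin (N+1) := (⟨l, hlf⟩ : Fin (N+1)).succAbove p with hq
  have hqval : (q:ℕ) = if (p:ℕ) < l then (p:ℕ) else (p:ℕ)+1 := coe_succAbove_mk hlf p
  by_cases hpl : (p:ℕ) < l
  · -- q = p < l ≤ d < d+1
    rw [if_pos hpl] at hqval
    have e1 : (glueLow σ₀ i₀ hiv τ).1 q = τ.1 ⟨(p:ℕ), by omega⟩ := by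
      rw [glueLow_apply_lt σ₀ i₀ hiv τ q (by omega)]
      exact OrderedSimplex.apply_val τ (show (q:ℕ) = (p:ℕ) by omega)
    have hpd : (p:ℕ) < d := by omega
    have e2 : (glueFace σ₀ i₀ hiv τ').1 p = τ.1 ⟨(p:ℕ), by omega⟩ := by
      rw [glueFace_apply_lt σ₀ i₀ hiv τ' p hpd, ← hface, face_apply]
      exact OrderedSimplex.apply_val τ (by
        rw [coe_succAbove_mk hld ⟨(p:ℕ), hpd⟩, if_pos hpl])
    rw [e1, e2]
  · rw [if_neg hpl] at hqval
    by_cases hpd : (p:ℕ) < d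
    · -- l ≤ p < d : q = p+1 < d+1
      have e1 : (glueLow σ₀ i₀ hiv τ).1 q = τ.1 ⟨(p:ℕ)+1, by omega⟩ := by
        rw [glueLow_apply_lt σ₀ i₀ hiv τ q (by omega)]
        exact OrderedSimplex.apply_val τ (show (q:ℕ) = (p:ℕ)+1 by omega)
      have e2 : (glueFace σ₀ i₀ hiv τ').1 p = τ.1 ⟨(p:ℕ)+1, by omega⟩ := by
        rw [glueFace_apply_lt σ₀ i₀ hiv τ' p hpd, ← hface, face_apply]
        exact OrderedSimplex.apply_val τ (by
          rw [coe_succAbove_mk hld ⟨(p:ℕ), hpd⟩, if_neg hpl])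
      rw [e1, e2]
    · -- p ≥ d : q = p+1 ≥ d+1
      have e1 : (glueLow σ₀ i₀ hiv τ).1 q = σ₀.1 q := glueLow_apply_ge σ₀ i₀ hiv τ q (by omega)
      have e2 : (glueFace σ₀ i₀ hiv τ').1 p = σ₀.1 p.succ := glueFace_apply_ge σ₀ i₀ hiv τ' p hpd
      rw [e1, e2]
      exact OrderedSimplex.apply_val σ₀ (show (q:ℕ) = (p.succ:ℕ) by
        have hps : (p.succ:ℕ) = (p:ℕ)+1 := Fin.val_succ p
        omega)

/-- the main cycle property of the restricted chain. -/
lemma low_cycle (hrank : grade ℕ (⊤ : α) = N + 2)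
    {z : SimpChains K (properPart α) (N+1)}
    (hcyc : simpBoundary K (properPart α) N z = 0)
    (σ₀ : OrderedSimplex (properPart α) (N+1)) (i₀ : Fin (N+1))
    {d : ℕ} (hiv : (i₀:ℕ) = d + 1) :
    simpBoundary K (Set.Ioo (⊥:α) (σ₀.1 i₀)) d
      (Finsupp.comapDomain (glueLow σ₀ i₀ hiv) z ((glueLow_inj σ₀ i₀ hiv).injOn)) = 0 := by
  have hdN : d + 1 ≤ N := by have := i₀.2; omega
  have hful : ∀ σ ∈ z.support, FullFlags σ := fun σ _ => properPart_full hrank σ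
  set x := σ₀.1 i₀ with hx
  set w : SimpChains K (Set.Ioo (⊥:α) x) (d+1) :=
    Finsupp.comapDomain (glueLow σ₀ i₀ hiv) z ((glueLow_inj σ₀ i₀ hiv).injOn) with hw
  have hwapp : ∀ τ, w τ = z (glueLow σ₀ i₀ hiv τ) := fun τ => rfl
  have hwful : ∀ τ ∈ w.support, FullFlags τ := by
    intro τ _ j
    have h1 : τ.1 j = (glueLow σ₀ i₀ hiv τ).1 ⟨(j:ℕ), by omega⟩ := by
      rw [glueLow_apply_lt σ₀ i₀ hiv τ _ (by exact j.2)]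
    rw [h1]
    exact properPart_full hrank (glueLow σ₀ i₀ hiv τ) ⟨(j:ℕ), by omega⟩
  ext τ'
  rw [Finsupp.coe_zero, Pi.zero_apply]
  by_cases hp : ∃ l, l ≤ d ∧ PatternAt τ' l
  · obtain ⟨l, hl, hpat⟩ := hp
    rw [eval_line hwful τ' hl hpat]
    have hlf : l < N + 1 := by omega
    set ψ' := glueFace σ₀ i₀ hiv τ' with hψ'
    have hψpat : PatternAt ψ' l := glueFace_pattern σ₀ i₀ hrank hiv τ' hl hpat
    have hzline : ∑ σ ∈ z.support.filter (fun σ => σ.face ⟨l, by omega⟩ = ψ'), z σ = 0 :=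
      line_sum_zero hcyc hful ψ' (by omega) hψpat
    have hbij : ∑ τ ∈ w.support.filter (fun τ => τ.face ⟨l, by omega⟩ = τ'), w τ =
        ∑ σ ∈ z.support.filter (fun σ => σ.face ⟨l, by omega⟩ = ψ'), z σ := by
      refine Finset.sum_bij (fun τ _ => glueLow σ₀ i₀ hiv τ) ?_ ?_ ?_ ?_
      · intro τ hτ
        have hm := Finset.mem_filter.1 hτ
        refine Finset.mem_filter.2 ⟨?_, ?_⟩
        · rw [Finsupp.mem_support_iff]
          have h5 := Finsupp.mem_support_iff.1 hm.1
          rw [hwapp] at h5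
          exact h5
        · exact glueLow_face σ₀ i₀ hiv τ τ' hl hlf (by omega) hm.2
      · intro τ₁ _ τ₂ _ h
        exact glueLow_inj σ₀ i₀ hiv h
      · -- surjectivity
        intro σ hσ
        have hm := Finset.mem_filter.1 hσ
        have hface : σ.face ⟨l, by omega⟩ = ψ' := hm.2
        have htail : ∀ p : Fin (N+1), ¬ (p:ℕ) < d + 1 → σ.1 p = σ₀.1 p := by
          intro p hp'
          have hp1 : 1 ≤ (p:ℕ) := by omega
          set q : Fin N := ⟨(p:ℕ) - 1, by have := p.2; omega⟩ with hqdef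
          have hql : ¬ ((q:ℕ) < l) := by
            show ¬ ((p:ℕ) - 1 < l)
            omega
          have e1 : σ.1 p = (σ.face ⟨l, by omega⟩).1 q := by
            rw [face_apply]
            refine OrderedSimplex.apply_val σ ?_
            rw [coe_succAbove_mk _ q, if_neg hql]
            show (p:ℕ) = (p:ℕ) - 1 + 1
            omega
          have e2 : ψ'.1 q = σ₀.1 p := by
            rw [hψ', glueFace_apply_ge σ₀ i₀ hiv τ' q (by show ¬ ((p:ℕ) - 1 < d); omega)]
            refine OrderedSimplex.apply_val σ₀ ?_
            rw [Fin.val_succ]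
            show (p:ℕ) - 1 + 1 = (p:ℕ)
            omega
          rw [e1, hface, e2]
        have heq : σ.1 i₀ = σ₀.1 i₀ := htail i₀ (by omega)
        refine ⟨lowPart σ₀ i₀ hiv σ heq, ?_, ?_⟩
        · refine Finset.mem_filter.2 ⟨?_, ?_⟩
          · rw [Finsupp.mem_support_iff, hwapp, glueLow_lowPart σ₀ i₀ hiv σ heq htail]
            exact Finsupp.mem_support_iff.1 hm.1
          · -- (lowPart σ).face ⟨l⟩ = τ'
            apply OrderedSimplex.exten
            intro j
            rw [face_apply]
            have hval : (((⟨l, by omega⟩ : Fin (d+1)).succAbove j) : ℕ) =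
                if (j:ℕ) < l then (j:ℕ) else (j:ℕ)+1 := coe_succAbove_mk _ j
            have e3 : (lowPart σ₀ i₀ hiv σ heq).1 ((⟨l, by omega⟩ : Fin (d+1)).succAbove j) =
                σ.1 ⟨(((⟨l, by omega⟩ : Fin (d+1)).succAbove j) : ℕ), by
                  have := ((⟨l, by omega⟩ : Fin (d+1)).succAbove j).2; omega⟩ := rfl
            have e4 : τ'.1 j = σ.1 ⟨(((⟨l, by omega⟩ : Fin (d+1)).succAbove j) : ℕ), by
                  have := ((⟨l, by omega⟩ : Fin (d+1)).succAbove j).2; omega⟩ := by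
              have hjN : (j:ℕ) < N := by have := j.2; omega
              have e5 : τ'.1 j = ψ'.1 ⟨(j:ℕ), hjN⟩ := by
                rw [hψ', glueFace_apply_lt σ₀ i₀ hiv τ' ⟨(j:ℕ), hjN⟩ (by exact j.2)]
              rw [e5, ← hface, face_apply]
              have h6 : (((⟨l, hlf⟩ : Fin (N+1)).succAbove ⟨(j:ℕ), hjN⟩ : Fin (N+1)) : ℕ) =
                  if (j:ℕ) < l then (j:ℕ) else (j:ℕ)+1 :=
                coe_succAbove_mk hlf (⟨(j:ℕ), hjN⟩ : Fin N)
              refine OrderedSimplex.apply_val σ ?_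
              show ((⟨l, hlf⟩ : Fin (N+1)).succAbove ⟨(j:ℕ), hjN⟩ : ℕ) =
                ((⟨l, by omega⟩ : Fin (d+1)).succAbove j : ℕ)
              rw [h6, hval]
            rw [e3, e4]
        · exact glueLow_lowPart σ₀ i₀ hiv σ heq htail
      · intro τ _
        exact hwapp τ
    rw [hbij, hzline, mul_zero]
  · rw [vanish_line hwful τ' (fun l hld hpat => hp ⟨l, hld, hpat⟩)]

end Cyc
section Final
variable {α : Type*} [Lattice α] [BoundedOrder α] [Fintype α] [GradeMinOrder ℕ α]
variable {K : Type*} [Field K]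

lemma RH_nontrivial {s : Set α} {jj : ℕ} (hempty : IsEmpty (OrderedSimplex s (jj+1)))
    (w : SimpChains K s jj) (hw : w ∈ simpCycles K s jj) (hw0 : w ≠ 0) :
    Nontrivial (ReducedHomology K s jj) := by
  refine ⟨⟨Submodule.Quotient.mk ⟨w, hw⟩, 0, ?_⟩⟩
  intro h
  replace h := (Submodule.Quotient.mk_eq_zero ((simpBoundaries K s jj).comap (simpCycles K s jj).subtype) (x := ⟨w, hw⟩)).1 h
  have h2 : w ∈ simpBoundaries K s jj := h
  obtain ⟨v, hv⟩ := h2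
  have hv0 : v = 0 := by
    ext σ
    exact isEmptyElim σ
  rw [hv0, map_zero] at hv
  exact hw0 hv.symm

lemma lowEmpty (x : α) {iv : ℕ} (hgx : grade ℕ x = iv + 1) :
    IsEmpty (OrderedSimplex (Set.Ioo (⊥:α) x) (iv+1)) := by
  refine ⟨fun τ => ?_⟩
  have hlow := grade_lower (fun y hy => ne_of_gt hy.1) τ iv (by omega)
  have hxv : τ.1 ⟨iv, by omega⟩ < x := (τ.2.2 _).2
  have h2 : grade ℕ (τ.1 ⟨iv, by omega⟩) < grade ℕ x := grade_strictMono hxv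
  omega

lemma mem_cycles_low {N : ℕ} (hrank : grade ℕ (⊤ : α) = N + 2)
    {z : SimpChains K (properPart α) (N+1)}
    (hcyc : simpBoundary K (properPart α) N z = 0)
    (σ₀ : OrderedSimplex (properPart α) (N+1)) (i₀ : Fin (N+1))
    {iv : ℕ} (hiv : (i₀:ℕ) = iv) :
    Finsupp.comapDomain (glueLow σ₀ i₀ hiv) z ((glueLow_inj σ₀ i₀ hiv).injOn) ∈
      simpCycles K (Set.Ioo (⊥:α) (σ₀.1 i₀)) iv := by
  cases iv with
  | zero => exact Submodule.mem_top
  | succ d => exact LinearMap.mem_ker.2 (low_cycle hrank hcyc σ₀ i₀ hiv)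

lemma good_of_mem_supp {N : ℕ} (hrank : grade ℕ (⊤ : α) = N + 2)
    {z : SimpChains K (properPart α) (N+1)}
    (hcyc : simpBoundary K (properPart α) N z = 0)
    {σ₀ : OrderedSimplex (properPart α) (N+1)} (hσ₀ : σ₀ ∈ z.support) (i₀ : Fin (N+1)) :
    IsGoodElement K (σ₀.1 i₀) := by
  have hgx : grade ℕ (σ₀.1 i₀) = (i₀:ℕ) + 1 := properPart_full hrank σ₀ i₀
  show σ₀.1 i₀ = ⊥ ∨ Nontrivial
    (ReducedHomology K (Set.Ioo (⊥:α) (σ₀.1 i₀)) (grade ℕ (σ₀.1 i₀) - 1))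
  right
  rw [hgx]
  show Nontrivial (ReducedHomology K (Set.Ioo (⊥:α) (σ₀.1 i₀)) ((i₀:ℕ)))
  refine RH_nontrivial (lowEmpty _ hgx)
    (Finsupp.comapDomain (glueLow σ₀ i₀ rfl) z ((glueLow_inj σ₀ i₀ rfl).injOn))
    (mem_cycles_low hrank hcyc σ₀ i₀ rfl) ?_
  intro h0
  have happ : Finsupp.comapDomain (glueLow σ₀ i₀ rfl) z ((glueLow_inj σ₀ i₀ rfl).injOn)
      (lowPart σ₀ i₀ rfl σ₀ rfl) = z σ₀ := by
    show z (glueLow σ₀ i₀ rfl (lowPart σ₀ i₀ rfl σ₀ rfl)) = z σ₀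
    rw [glueLow_lowPart σ₀ i₀ rfl σ₀ rfl (fun p _ => rfl)]
  rw [h0] at happ
  exact (Finsupp.mem_support_iff.1 hσ₀) happ.symm

lemma Ioo_eq_properPart : Set.Ioo (⊥:α) ⊤ = properPart α := by
  ext y
  simp only [Set.mem_Ioo, properPart, Set.mem_setOf_eq, bot_lt_iff_ne_bot, lt_top_iff_ne_top]

lemma top_good {n : ℕ} (hrank : grade ℕ (⊤ : α) = n)
    (hH : Nontrivial (ReducedHomology K (properPart α) (n - 1))) :
    IsGoodElement K (⊤ : α) := by
  show (⊤:α) = ⊥ ∨ Nontrivial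
    (ReducedHomology K (Set.Ioo (⊥:α) ⊤) (grade ℕ (⊤:α) - 1))
  right
  rw [hrank, Ioo_eq_properPart]
  exact hH

/-- final counting lemma -/
lemma main_count {n : ℕ} (hrank : grade ℕ (⊤ : α) = n)
    (M : Set (ℕ → α)) (hR : Rich (⊤:α) n M)
    (hP : ∀ f ∈ M, ∀ j, 1 ≤ j → j < n → IsGoodElement K (f j))
    (hPt : IsGoodElement K (⊤:α))
    (r k : ℕ) (hrk : r ≤ k) (hkn : k ≤ n)
    (G : Finset α) (hG : G.card ≤ r) (hGt : ∀ g ∈ G, g ≠ ⊤) :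
    (n - r).choose (k - r) ≤
      Nat.card {x : α // grade ℕ x = k ∧ IsGoodElement K x ∧ ∀ g ∈ G, ¬ x ≤ g} := by
  have hGt' : ∀ g ∈ G, ¬ (⊤:α) ≤ g := fun g hg h => hGt g hg (top_le_iff.1 h)
  have hfin := comb_count (n + (k - r)) n ⊤ hrank M hR (IsGoodElement K) hP
    (Or.inl rfl) hPt r k hrk hkn le_rfl G hG hGt'
  have hseteq : {x : α | grade ℕ x = k ∧ IsGoodElement K x ∧ x ≤ ⊤ ∧ ∀ g ∈ G, ¬ x ≤ g} =
      {x : α | grade ℕ x = k ∧ IsGoodElement K x ∧ ∀ g ∈ G, ¬ x ≤ g} := by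
    ext x
    exact ⟨fun ⟨a, b, _, c⟩ => ⟨a, b, c⟩, fun ⟨a, b, c⟩ => ⟨a, b, le_top, c⟩⟩
  rw [hseteq] at hfin
  have hcard : Nat.card {x : α // grade ℕ x = k ∧ IsGoodElement K x ∧ ∀ g ∈ G, ¬ x ≤ g} =
      Set.ncard {x : α | grade ℕ x = k ∧ IsGoodElement K x ∧ ∀ g ∈ G, ¬ x ≤ g} :=
    Nat.card_coe_set_eq _
  rw [hcard]
  exact hfin

end Final

/-- **Step 4.**  Let `L` be a finite graded lattice of rank `n` whose proper part has
nonzero reduced homology `H̃_{n-2}` over `K`.  For all `0 ≤ r ≤ k ≤ n` and every order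
ideal of `L ∖ {⊤}` generated by at most `r` elements (given by a generating set `G`),
at least `binom(n-r, k-r)` good elements of rank `k` avoid the ideal. -/
theorem good_elements_avoiding_ideal
    (n : ℕ) (hn : 1 ≤ n)
    (α : Type*) [Lattice α] [BoundedOrder α] [Fintype α] [GradeMinOrder ℕ α]
    (hrank : grade ℕ (⊤ : α) = n)
    (K : Type*) [Field K]
    (hH : Nontrivial (ReducedHomology K (properPart α) (n - 1))) :
    ∀ r k : ℕ, r ≤ k → k ≤ n → ∀ G : Finset α, G.card ≤ r → (∀ g ∈ G, g ≠ ⊤) →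
      (n - r).choose (k - r) ≤
        Nat.card {x : α // grade ℕ x = k ∧ IsGoodElement K x ∧ ∀ g ∈ G, ¬ x ≤ g} := by
  intro r k hrk hkn G hG hGt
  have hPt : IsGoodElement K (⊤:α) := top_good hrank hH
  rcases Nat.lt_or_ge n 2 with h1 | h2
  · -- n = 1
    have hn1 : n = 1 := by omega
    subst hn1
    refine main_count hrank {fun _ => (⊥:α)} ?_ ?_ hPt r k hrk hkn G hG hGt
    · refine ⟨⟨_, rfl⟩, ?_, ?_⟩
      · intro f _
        exact ⟨fun j h1 hj => by omega, fun j h1 hj => by omega, fun j h1 hj => by omega⟩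
      · intro f _ j h1 hj
        omega
    · intro f _ j h1 hj
      omega
  · -- n ≥ 2
    obtain ⟨N, rfl⟩ : ∃ N, n = N + 2 := ⟨n - 2, by omega⟩
    have hH' : Nontrivial (ReducedHomology K (properPart α) (N + 1)) := hH
    have hne : (simpBoundaries K (properPart α) (N+1)).comap
        (simpCycles K (properPart α) (N+1)).subtype ≠ ⊤ := by
      intro heq
      have := Submodule.Quotient.subsingleton_iff.2 heq
      exact (not_subsingleton_iff_nontrivial.2 hH') this
    obtain ⟨zc, hzc⟩ : ∃ zc : ↥(simpCycles K (properPart α) (N+1)),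
        zc ∉ (simpBoundaries K (properPart α) (N+1)).comap
          (simpCycles K (properPart α) (N+1)).subtype := by
      by_contra h
      push_neg at h
      exact hne (Submodule.eq_top_iff'.2 h)
    have hcyc : simpBoundary K (properPart α) N zc.1 = 0 :=
      LinearMap.mem_ker.1 (zc.2 : zc.1 ∈ LinearMap.ker (simpBoundary K (properPart α) N))
    have hz0 : zc.1 ≠ 0 := by
      intro h
      apply hzc
      rw [Submodule.mem_comap]
      show zc.1 ∈ simpBoundaries K (properPart α) (N+1)
      rw [h]
      exact zero_mem _
    refine main_count hrank _ (rich_of_cycle hrank zc.1 hz0 hcyc) ?_ hPt r k hrk hkn G hG hGt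
    rintro f ⟨σ, hσ, rfl⟩ j hj1 hjn
    rw [toFn, dif_pos ⟨hj1, by omega⟩]
    exact good_of_mem_supp hrank hcyc hσ ⟨j-1, by omega⟩
end

section
/- Let L be a finite graded lattice of rank n with H̃_{n-2}(Δ(L̄); k) ≠ 0, and let J be the order ideal of L \ {1̂} generated by the set of good coatoms of L. Then M = J ∪ {1̂} is a graded lattice of rank n, all coatoms of M are good, and H̃_{n-2}(Δ(M̄); k) ≠ 0. -/
set_option maxSynthPendingDepth 2

open Finset

variable {α : Type*}

-- ================= AUX =================
section Aux

variable {K : Type*} [CommRing K]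

noncomputable instance instFintypeOrderedSimplex [Finite α] [Preorder α] (s : Set α) (j : ℕ) :
    Fintype (OrderedSimplex s j) := by
  have : Finite (OrderedSimplex s j) := by
    unfold OrderedSimplex; exact Subtype.finite
  exact Fintype.ofFinite _

open Classical in
theorem simpBoundary_apply [Preorder α] (s : Set α) (j : ℕ) (l : SimpChains K s (j+1))
    (τ : OrderedSimplex s j) :
    simpBoundary K s j l τ =
      ∑ σ ∈ l.support, ∑ i : Fin (j+1),
        (if σ.face i = τ then (-1 : K)^(i:ℕ) * l σ else 0) := by
  classical
  rw [simpBoundary, Finsupp.lsum_apply]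
  rw [Finsupp.sum_apply]
  rw [Finsupp.sum]
  refine Finset.sum_congr rfl fun σ _ => ?_
  rw [LinearMap.sum_apply, Finsupp.finset_sum_apply]
  refine Finset.sum_congr rfl fun i _ => ?_
  rw [LinearMap.smul_apply, Finsupp.lsingle_apply, Finsupp.smul_apply, Finsupp.single_apply]
  simp only [smul_eq_mul, mul_ite, mul_zero]

theorem reducedHomology_nontrivial_iff [Preorder α] (s : Set α) (j : ℕ) :
    Nontrivial (ReducedHomology K s j) ↔ ¬ (simpCycles K s j ≤ simpBoundaries K s j) := by
  have h : Subsingleton (ReducedHomology K s j) ↔ simpCycles K s j ≤ simpBoundaries K s j := by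
    unfold ReducedHomology
    rw [Submodule.Quotient.subsingleton_iff, Submodule.comap_subtype_eq_top]
  rw [← not_subsingleton_iff_nontrivial, h]

theorem simpBoundaries_eq_bot [Preorder α] (s : Set α) (j : ℕ)
    (h : IsEmpty (OrderedSimplex s (j+1))) : simpBoundaries K s j = ⊥ := by
  rw [simpBoundaries, LinearMap.range_eq_bot]
  apply LinearMap.ext
  intro l
  have hl : l = 0 := by ext σ; exact h.elim σ
  rw [hl, map_zero]; rfl

theorem nontrivial_of_cycle [Preorder α] {s : Set α} {j : ℕ} {z : SimpChains K s j}
    (hz : z ∈ simpCycles K s j) (hz0 : z ≠ 0)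
    (hb : simpBoundaries K s j = ⊥) : Nontrivial (ReducedHomology K s j) := by
  rw [reducedHomology_nontrivial_iff, hb]
  intro h
  exact hz0 (by simpa using h hz)

theorem exists_cycle [Preorder α] {s : Set α} {j : ℕ}
    (h : Nontrivial (ReducedHomology K s j)) :
    ∃ z, z ∈ simpCycles K s j ∧ z ≠ 0 := by
  rw [reducedHomology_nontrivial_iff] at h
  obtain ⟨z, hz, hz2⟩ := SetLike.not_le_iff_exists.1 h
  exact ⟨z, hz, fun h0 => hz2 (h0 ▸ (simpBoundaries K s j).zero_mem)⟩

theorem nontrivial_homology_of_empty [Preorder α] [Nontrivial K] {s : Set α}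
    (hs : ∀ x, x ∉ s) : Nontrivial (ReducedHomology K s 0) := by
  have he : IsEmpty (OrderedSimplex s 1) :=
    ⟨fun σ => hs _ (σ.2.2 0)⟩
  have σ₀ : OrderedSimplex s 0 :=
    ⟨Fin.elim0, fun a => a.elim0, fun i => i.elim0⟩
  refine nontrivial_of_cycle (z := Finsupp.single σ₀ 1) ?_ ?_ (simpBoundaries_eq_bot s 0 he)
  · exact Submodule.mem_top
  · exact fun h => one_ne_zero (Finsupp.single_eq_zero.1 h)

end Aux

section Fin

theorem succAbove_castSucc_last {j : ℕ} (i : Fin (j+1)) :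
    (Fin.castSucc i).succAbove (Fin.last j) = Fin.last (j+1) := by
  rw [Fin.succAbove_of_le_castSucc _ _ (Fin.castSucc_le_castSucc_iff.2 (Fin.le_last i)),
    Fin.succ_last]

theorem snoc_comp_succAbove_castSucc {j : ℕ} (f : Fin (j+1) → α) (c : α) (i : Fin (j+1)) :
    (Fin.snoc f c : Fin (j+2) → α) ∘ (Fin.castSucc i).succAbove
      = Fin.snoc (f ∘ i.succAbove) c := by
  funext x
  refine Fin.lastCases ?_ (fun k => ?_) x
  · simp [succAbove_castSucc_last]
  · simp [Fin.castSucc_succAbove_castSucc]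

theorem snoc_left_injective {j : ℕ} {c : α} {f g : Fin j → α}
    (h : (Fin.snoc f c : Fin (j+1) → α) = Fin.snoc g c) : f = g := by
  funext k
  have := congrFun h (Fin.castSucc k)
  simpa using this

theorem strictMono_snoc [Preorder α] {j : ℕ} {f : Fin j → α} (hf : StrictMono f) {c : α}
    (hc : ∀ i, f i < c) : StrictMono (Fin.snoc f c : Fin (j+1) → α) := by
  intro a b hab
  revert hab
  refine Fin.lastCases ?_ (fun bk => ?_) b
  · intro hab'
    obtain ⟨ak, rfl⟩ := Fin.exists_castSucc_eq.2 (Fin.ne_last_of_lt hab')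
    simpa using hc ak
  · intro hab'
    have hb' : a < Fin.last j := lt_of_lt_of_le hab' (Fin.le_last _)
    obtain ⟨ak, rfl⟩ := Fin.exists_castSucc_eq.2 (Fin.ne_last_of_lt hb')
    simpa using hf (Fin.castSucc_lt_castSucc_iff.1 hab')

end Fin

section Simplex

variable [Preorder α] {t s : Set α} {c : α} {j : ℕ}

theorem OrderedSimplex.ext' {s : Set α} {j : ℕ} {σ τ : OrderedSimplex s j}
    (h : σ.1 = τ.1) : σ = τ := Subtype.ext h

/-- Append `c` on top of a simplex of `t`, landing in `s`. -/
noncomputable def OrderedSimplex.snocS (u : OrderedSimplex t j)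
    (hts : ∀ x ∈ t, x ∈ s) (hcs : c ∈ s) (hlt : ∀ x ∈ t, x < c) :
    OrderedSimplex s (j+1) :=
  ⟨Fin.snoc u.1 c, strictMono_snoc u.2.1 (fun i => hlt _ (u.2.2 i)), fun i => by
    refine Fin.lastCases ?_ (fun k => ?_) i
    · simpa using hcs
    · simpa using hts _ (u.2.2 k)⟩

theorem snocS_injective (hts : ∀ x ∈ t, x ∈ s) (hcs : c ∈ s) (hlt : ∀ x ∈ t, x < c) :
    Function.Injective (fun u : OrderedSimplex t j => u.snocS hts hcs hlt) := by
  intro u v h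
  exact OrderedSimplex.ext' (snoc_left_injective (congrArg Subtype.val h))

theorem snocS_face_castSucc (u : OrderedSimplex t (j+1)) (i : Fin (j+1))
    (hts : ∀ x ∈ t, x ∈ s) (hcs : c ∈ s) (hlt : ∀ x ∈ t, x < c) :
    (u.snocS hts hcs hlt).face (Fin.castSucc i) = (u.face i).snocS hts hcs hlt :=
  OrderedSimplex.ext' (snoc_comp_succAbove_castSucc u.1 c i)

theorem snocS_val_last (u : OrderedSimplex t j)
    (hts : ∀ x ∈ t, x ∈ s) (hcs : c ∈ s) (hlt : ∀ x ∈ t, x < c) :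
    (u.snocS hts hcs hlt).1 (Fin.last j) = c := by
  simp [OrderedSimplex.snocS]

theorem face_castSucc_val_last (σ : OrderedSimplex s (j+2)) (i : Fin (j+1)) :
    (σ.face (Fin.castSucc i)).1 (Fin.last j) = σ.1 (Fin.last (j+1)) := by
  show σ.1 ((Fin.castSucc i).succAbove (Fin.last j)) = _
  rw [succAbove_castSucc_last]

end Simplex

section Grade

theorem strictMono_fin_gap {m : ℕ} {g : Fin m → ℕ} (hg : StrictMono g)
    {i j : Fin m} (hij : i ≤ j) : g i + (j.1 - i.1) ≤ g j := by
  have key : ∀ k (h : i.1 + k < m), g i + k ≤ g ⟨i.1 + k, h⟩ := by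
    intro k
    induction k with
    | zero => intro h; simp
    | succ k ih =>
      intro h
      have h' : i.1 + k < m := by omega
      have := ih h'
      have hlt : g ⟨i.1 + k, h'⟩ < g ⟨i.1 + (k+1), h⟩ := hg (by simp [Fin.lt_def])
      omega
  have hjm := j.2
  have him := hij
  rw [Fin.le_def] at him
  have hk := key (j.1 - i.1) (by omega)
  have hje : (⟨i.1 + (j.1 - i.1), by omega⟩ : Fin m) = j := by
    apply Fin.ext; simp; omega
  rw [hje] at hk
  exact hk

variable [PartialOrder α] [BoundedOrder α] [GradeMinOrder ℕ α]

theorem grade_pos_of_ne_bot {x : α} (hx : x ≠ ⊥) : 0 < grade ℕ x := by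
  have := grade_strictMono (α := α) (𝕆 := ℕ) (bot_lt_iff_ne_bot.2 hx)
  simpa [grade_bot] using this

theorem grade_lt_top_of_ne_top {x : α} (hx : x ≠ ⊤) : grade ℕ x < grade ℕ (⊤ : α) :=
  grade_strictMono (lt_top_iff_ne_top.2 hx)

/-- In a graded poset of rank `p+2`, a maximal chain of the proper part has an
element of each rank `1, …, p+1`. -/
theorem grade_vertex {p : ℕ} (hrank : grade ℕ (⊤ : α) = p + 2)
    (σ : OrderedSimplex (properPart α) (p+1)) (i : Fin (p+1)) :
    grade ℕ (σ.1 i) = i.1 + 1 := by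
  have hg : StrictMono (fun k : Fin (p+1) => grade ℕ (σ.1 k)) :=
    grade_strictMono.comp σ.2.1
  have h0 : 0 < grade ℕ (σ.1 ⟨0, by omega⟩) := grade_pos_of_ne_bot (σ.2.2 _).1
  have hl : grade ℕ (σ.1 ⟨p, by omega⟩) < p + 2 := by
    have := grade_lt_top_of_ne_top (σ.2.2 ⟨p, by omega⟩).2
    omega
  have h1 := strictMono_fin_gap hg (i := ⟨0, by omega⟩) (j := i)
    (Fin.le_def.mpr (Nat.zero_le _))
  have h2 := strictMono_fin_gap hg (i := i) (j := ⟨p, by omega⟩)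
    (Fin.le_def.mpr (Nat.lt_succ_iff.1 i.2))
  simp only at h1 h2
  have hi := i.2
  omega

theorem no_simplex_properPart {n : ℕ} (hrank : grade ℕ (⊤ : α) = n) (hn : 1 ≤ n) :
    IsEmpty (OrderedSimplex (properPart α) n) := by
  refine ⟨fun σ => ?_⟩
  have hg : StrictMono (fun k : Fin n => grade ℕ (σ.1 k)) :=
    grade_strictMono.comp σ.2.1
  have h0 : 0 < grade ℕ (σ.1 ⟨0, by omega⟩) := grade_pos_of_ne_bot (σ.2.2 _).1
  have hl : grade ℕ (σ.1 ⟨n-1, by omega⟩) < n := by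
    have := grade_lt_top_of_ne_top (σ.2.2 ⟨n-1, by omega⟩).2
    omega
  have h1 := strictMono_fin_gap hg (i := ⟨0, by omega⟩) (j := ⟨n-1, by omega⟩)
    (Fin.le_def.mpr (Nat.zero_le _))
  simp only at h1
  omega

theorem no_simplex_Ioo {m : ℕ} {c : α} (hc : grade ℕ c = m + 1) :
    IsEmpty (OrderedSimplex (Set.Ioo (⊥ : α) c) (m+1)) := by
  refine ⟨fun σ => ?_⟩
  have hg : StrictMono (fun k : Fin (m+1) => grade ℕ (σ.1 k)) :=
    grade_strictMono.comp σ.2.1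
  have h0 : 0 < grade ℕ (σ.1 ⟨0, by omega⟩) :=
    grade_pos_of_ne_bot (ne_bot_of_gt (σ.2.2 ⟨0, by omega⟩).1)
  have hl : grade ℕ (σ.1 ⟨m, by omega⟩) < m + 1 := by
    have := grade_strictMono (𝕆 := ℕ) (σ.2.2 ⟨m, by omega⟩).2
    omega
  have h1 := strictMono_fin_gap hg (i := ⟨0, by omega⟩) (j := ⟨m, by omega⟩)
    (Fin.le_def.mpr (Nat.zero_le _))
  simp only at h1
  omega

end Grade

section Incl

variable {K : Type*} [CommRing K]

/-- Inclusion of simplices along `t ⊆ s`. -/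
def OrderedSimplex.inclS [Preorder α] {t s : Set α} {j : ℕ} (u : OrderedSimplex t j)
    (hts : ∀ x ∈ t, x ∈ s) : OrderedSimplex s j :=
  ⟨u.1, u.2.1, fun i => hts _ (u.2.2 i)⟩

theorem inclS_injective [Preorder α] {t s : Set α} {j : ℕ} (hts : ∀ x ∈ t, x ∈ s) :
    Function.Injective (fun u : OrderedSimplex t j => u.inclS hts) := by
  intro u v h
  have h' : u.inclS hts = v.inclS hts := h
  apply OrderedSimplex.ext'
  show (u.inclS hts).1 = (v.inclS hts).1
  rw [h']

theorem inclS_face [Preorder α] {t s : Set α} {j : ℕ} (hts : ∀ x ∈ t, x ∈ s)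
    (u : OrderedSimplex t (j+1)) (i : Fin (j+1)) :
    (u.inclS hts).face i = (u.face i).inclS hts := rfl

open Classical in
theorem boundary_comap_incl [Preorder α] [Finite α] {t s : Set α} (hts : ∀ x ∈ t, x ∈ s)
    {j : ℕ} (z : SimpChains K s (j+1))
    (hsupp : ∀ σ ∈ z.support, ∃ u : OrderedSimplex t (j+1), u.inclS hts = σ)
    (τ : OrderedSimplex t j) :
    simpBoundary K t j
        (Finsupp.comapDomain (fun u : OrderedSimplex t (j+1) => u.inclS hts) z
          (inclS_injective hts).injOn) τ
      = simpBoundary K s j z (τ.inclS hts) := by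
  classical
  rw [simpBoundary_apply, simpBoundary_apply]
  have hL : (∑ u ∈ (Finsupp.comapDomain (fun u : OrderedSimplex t (j+1) => u.inclS hts) z
        (inclS_injective hts).injOn).support, ∑ i : Fin (j+1),
        if u.face i = τ then (-1:K)^(i:ℕ) *
          (Finsupp.comapDomain (fun u : OrderedSimplex t (j+1) => u.inclS hts) z
            (inclS_injective hts).injOn) u else 0)
      = ∑ u : OrderedSimplex t (j+1), ∑ i : Fin (j+1),
        if u.face i = τ then (-1:K)^(i:ℕ) *
          (Finsupp.comapDomain (fun u : OrderedSimplex t (j+1) => u.inclS hts) z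
            (inclS_injective hts).injOn) u else 0 :=
    Finset.sum_subset (Finset.subset_univ _) (fun u _ hu => Finset.sum_eq_zero fun i _ => by
      rw [Finsupp.notMem_support_iff.1 hu, mul_zero, ite_self])
  have hsub : z.support ⊆ Finset.univ.image (fun u : OrderedSimplex t (j+1) => u.inclS hts) := by
    intro σ hσ
    obtain ⟨u, hu⟩ := hsupp σ hσ
    exact Finset.mem_image.2 ⟨u, Finset.mem_univ _, hu⟩
  have hR : (∑ σ ∈ z.support, ∑ i : Fin (j+1),
        if σ.face i = τ.inclS hts then (-1:K)^(i:ℕ) * z σ else 0)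
      = ∑ σ ∈ Finset.univ.image (fun u : OrderedSimplex t (j+1) => u.inclS hts),
          ∑ i : Fin (j+1), if σ.face i = τ.inclS hts then (-1:K)^(i:ℕ) * z σ else 0 :=
    Finset.sum_subset hsub (fun σ _ hσ => Finset.sum_eq_zero fun i _ => by
      rw [Finsupp.notMem_support_iff.1 hσ, mul_zero, ite_self])
  rw [hL, hR]
  rw [Finset.sum_image (fun u _ v _ h => inclS_injective hts h)]
  refine Finset.sum_congr rfl fun u _ => Finset.sum_congr rfl fun i _ => ?_
  rw [Finsupp.comapDomain_apply, inclS_face]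
  have hcond : ((u.face i).inclS hts = τ.inclS hts) = (u.face i = τ) :=
    propext ⟨fun h => inclS_injective hts h, fun h => by rw [h]⟩
  rw [hcond]

theorem mem_cycles_comap_incl [Preorder α] [Finite α] {t s : Set α} (hts : ∀ x ∈ t, x ∈ s)
    {p : ℕ} {z : SimpChains K s (p+1)} (hz : z ∈ simpCycles K s (p+1))
    (hsupp : ∀ σ ∈ z.support, ∃ u : OrderedSimplex t (p+1), u.inclS hts = σ) :
    Finsupp.comapDomain (fun u : OrderedSimplex t (p+1) => u.inclS hts) z
        (inclS_injective hts).injOn ∈ simpCycles K t (p+1) := by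
  simp only [simpCycles, LinearMap.mem_ker] at hz ⊢
  ext τ
  rw [boundary_comap_incl hts z hsupp τ, hz]
  rfl

end Incl

section Snoc

variable {K : Type*} [CommRing K] [PartialOrder α] [BoundedOrder α]

theorem exists_snocS_eq {c : α} {m : ℕ}
    (σ' : OrderedSimplex (properPart α) (m+1))
    (hts : ∀ x ∈ Set.Ioo (⊥:α) c, x ∈ properPart α) (hcs : c ∈ properPart α)
    (hlt : ∀ x ∈ Set.Ioo (⊥:α) c, x < c)
    (hσc : σ'.1 (Fin.last m) = c) :
    ∃ u : OrderedSimplex (Set.Ioo (⊥:α) c) m, u.snocS hts hcs hlt = σ' := by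
  refine ⟨⟨σ'.1 ∘ Fin.castSucc, σ'.2.1.comp Fin.strictMono_castSucc, fun k => ?_⟩, ?_⟩
  · constructor
    · exact bot_lt_iff_ne_bot.2 (σ'.2.2 _).1
    · rw [← hσc]; exact σ'.2.1 (Fin.castSucc_lt_last k)
  · apply OrderedSimplex.ext'
    show Fin.snoc (σ'.1 ∘ Fin.castSucc) c = σ'.1
    funext x
    refine Fin.lastCases ?_ (fun k => ?_) x
    · rw [Fin.snoc_last, hσc]
    · rw [Fin.snoc_castSucc]; rfl

variable [GradeMinOrder ℕ α] [Finite α]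

open Classical in
theorem boundary_comap_snoc {q : ℕ} (hrank : grade ℕ (⊤ : α) = q + 3)
    {c : α} (hc : grade ℕ c = q + 2)
    (hts : ∀ x ∈ Set.Ioo (⊥:α) c, x ∈ properPart α) (hcs : c ∈ properPart α)
    (hlt : ∀ x ∈ Set.Ioo (⊥:α) c, x < c)
    (z : SimpChains K (properPart α) (q+2))
    (τ : OrderedSimplex (Set.Ioo (⊥:α) c) q) :
    simpBoundary K (Set.Ioo (⊥:α) c) q
        (Finsupp.comapDomain (fun u : OrderedSimplex (Set.Ioo (⊥:α) c) (q+1) =>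
          u.snocS hts hcs hlt) z (snocS_injective hts hcs hlt).injOn) τ
      = simpBoundary K (properPart α) (q+1) z (τ.snocS hts hcs hlt) := by
  classical
  rw [simpBoundary_apply, simpBoundary_apply]
  have hL : (∑ u ∈ (Finsupp.comapDomain (fun u : OrderedSimplex (Set.Ioo (⊥:α) c) (q+1) =>
          u.snocS hts hcs hlt) z (snocS_injective hts hcs hlt).injOn).support,
        ∑ i : Fin (q+1), if u.face i = τ then (-1:K)^(i:ℕ) *
          (Finsupp.comapDomain (fun u : OrderedSimplex (Set.Ioo (⊥:α) c) (q+1) =>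
            u.snocS hts hcs hlt) z (snocS_injective hts hcs hlt).injOn) u else 0)
      = ∑ u : OrderedSimplex (Set.Ioo (⊥:α) c) (q+1),
        ∑ i : Fin (q+1), if u.face i = τ then (-1:K)^(i:ℕ) *
          (Finsupp.comapDomain (fun u : OrderedSimplex (Set.Ioo (⊥:α) c) (q+1) =>
            u.snocS hts hcs hlt) z (snocS_injective hts hcs hlt).injOn) u else 0 :=
    Finset.sum_subset (Finset.subset_univ _) (fun u _ hu => Finset.sum_eq_zero fun i _ => by
      rw [Finsupp.notMem_support_iff.1 hu, mul_zero, ite_self])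
  have hR : (∑ σ' ∈ z.support, ∑ i : Fin (q+2),
        if σ'.face i = τ.snocS hts hcs hlt then (-1:K)^(i:ℕ) * z σ' else 0)
      = ∑ σ' : OrderedSimplex (properPart α) (q+2), ∑ i : Fin (q+2),
        if σ'.face i = τ.snocS hts hcs hlt then (-1:K)^(i:ℕ) * z σ' else 0 :=
    Finset.sum_subset (Finset.subset_univ _) (fun σ' _ hσ' => Finset.sum_eq_zero fun i _ => by
      rw [Finsupp.notMem_support_iff.1 hσ', mul_zero, ite_self])
  rw [hL, hR]
  have hgv : ∀ σ' : OrderedSimplex (properPart α) (q+2), ∀ i : Fin (q+2),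
      grade ℕ (σ'.1 i) = i.1 + 1 := fun σ' i => grade_vertex hrank σ' i
  -- peel the last face index on the right-hand side
  have hpeel : ∀ σ' : OrderedSimplex (properPart α) (q+2),
      (∑ i : Fin (q+2), if σ'.face i = τ.snocS hts hcs hlt then (-1:K)^(i:ℕ) * z σ' else 0)
      = ∑ i : Fin (q+1),
          if σ'.face i.castSucc = τ.snocS hts hcs hlt then (-1:K)^(i:ℕ) * z σ' else 0 := by
    intro σ'
    rw [Fin.sum_univ_castSucc]
    have hne : σ'.face (Fin.last (q+1)) ≠ τ.snocS hts hcs hlt := by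
      intro h
      have h1 : (σ'.face (Fin.last (q+1))).1 (Fin.last q) = σ'.1 (Fin.last q).castSucc := by
        show σ'.1 ((Fin.last (q+1)).succAbove (Fin.last q)) = _
        rw [Fin.succAbove_last]
      have h2 := congrFun (congrArg Subtype.val h) (Fin.last q)
      rw [h1, snocS_val_last] at h2
      have h3 := hgv σ' (Fin.last q).castSucc
      rw [h2, hc] at h3
      simp at h3
    rw [if_neg hne, add_zero]
    exact Finset.sum_congr rfl fun i _ => by rw [Fin.coe_castSucc]
  simp only [hpeel]
  -- restrict to simplices whose top vertex is `c`
  have hvan : ∀ σ' ∈ Finset.univ, σ' ∉ Finset.univ.image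
      (fun u : OrderedSimplex (Set.Ioo (⊥:α) c) (q+1) => u.snocS hts hcs hlt) →
      (∑ i : Fin (q+1),
        if σ'.face i.castSucc = τ.snocS hts hcs hlt then (-1:K)^(i:ℕ) * z σ' else 0) = 0 := by
    intro σ' _ hσ'
    refine Finset.sum_eq_zero fun i _ => ?_
    rw [if_neg]
    intro h
    apply hσ'
    have h2 := congrFun (congrArg Subtype.val h) (Fin.last q)
    rw [face_castSucc_val_last, snocS_val_last] at h2
    obtain ⟨u, hu⟩ := exists_snocS_eq σ' hts hcs hlt h2
    exact Finset.mem_image.2 ⟨u, Finset.mem_univ _, hu⟩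
  rw [← Finset.sum_subset (Finset.subset_univ _) hvan]
  rw [Finset.sum_image (fun u _ v _ h => snocS_injective hts hcs hlt h)]
  refine Finset.sum_congr rfl fun u _ => Finset.sum_congr rfl fun i _ => ?_
  rw [Finsupp.comapDomain_apply, snocS_face_castSucc]
  have hcond : ((u.face i).snocS hts hcs hlt = τ.snocS hts hcs hlt) = (u.face i = τ) :=
    propext ⟨fun h => snocS_injective hts hcs hlt h, fun h => by rw [h]⟩
  rw [hcond]

theorem support_coatom_good [Nontrivial K] {p : ℕ}
    (hrank : grade ℕ (⊤ : α) = p + 2)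
    {z : SimpChains K (properPart α) (p+1)} (hz : z ∈ simpCycles K (properPart α) (p+1))
    {σ : OrderedSimplex (properPart α) (p+1)} (hσ : σ ∈ z.support) :
    grade ℕ (σ.1 (Fin.last p)) = p + 1 ∧
      Nontrivial (ReducedHomology K (Set.Ioo (⊥:α) (σ.1 (Fin.last p))) p) := by
  have hc : grade ℕ (σ.1 (Fin.last p)) = p + 1 := by
    have := grade_vertex hrank σ (Fin.last p)
    simpa using this
  refine ⟨hc, ?_⟩
  set c := σ.1 (Fin.last p) with hcdef
  have hcs : c ∈ properPart α := σ.2.2 _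
  have hts : ∀ x ∈ Set.Ioo (⊥:α) c, x ∈ properPart α := by
    intro x hx
    refine ⟨ne_bot_of_gt hx.1, fun hxt => ?_⟩
    have h1 := grade_strictMono (𝕆 := ℕ) hx.2
    rw [hxt] at h1
    have h2 := grade_lt_top_of_ne_top hcs.2
    omega
  have hlt : ∀ x ∈ Set.Ioo (⊥:α) c, x < c := fun x hx => hx.2
  have hmem : Finsupp.comapDomain (fun u : OrderedSimplex (Set.Ioo (⊥:α) c) p =>
      u.snocS hts hcs hlt) z (snocS_injective hts hcs hlt).injOn
      ∈ simpCycles K (Set.Ioo (⊥:α) c) p := by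
    cases p with
    | zero => exact Submodule.mem_top
    | succ q =>
      simp only [simpCycles, LinearMap.mem_ker] at hz ⊢
      ext τ
      rw [boundary_comap_snoc hrank hc hts hcs hlt z τ, hz]
      rfl
  have hzt0 : Finsupp.comapDomain (fun u : OrderedSimplex (Set.Ioo (⊥:α) c) p =>
      u.snocS hts hcs hlt) z (snocS_injective hts hcs hlt).injOn ≠ 0 := by
    obtain ⟨u, hu⟩ := exists_snocS_eq σ hts hcs hlt rfl
    intro h0
    have h1 : Finsupp.comapDomain (fun u : OrderedSimplex (Set.Ioo (⊥:α) c) p =>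
        u.snocS hts hcs hlt) z (snocS_injective hts hcs hlt).injOn u = z σ := by
      rw [Finsupp.comapDomain_apply]
      exact congrArg z hu
    rw [h0] at h1
    rw [Finsupp.coe_zero, Pi.zero_apply] at h1
    exact Finsupp.mem_support_iff.1 hσ h1.symm
  exact nontrivial_of_cycle hmem hzt0
    (simpBoundaries_eq_bot _ _ (no_simplex_Ioo hc))

end Snoc

/-- Restricting to the ideal generated by the good coatoms: with `M = J ∪ {⊤}`, where
`J` is the order ideal of `L ∖ {⊤}` generated by the good coatoms, the subposet `M`
is a graded lattice of rank `n` (pairs have meets and joins in `M`, maximal chains of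
`M` have `n + 1` elements), all coatoms of `M` are good, and
`H̃_{n-2}(Δ(M∖{⊥,⊤}); K) ≠ 0`. -/
theorem restrict_to_good_coatoms
    (n : ℕ) (hn : 1 ≤ n)
    (α : Type*) [Lattice α] [BoundedOrder α] [Fintype α] [GradeMinOrder ℕ α]
    (hrank : grade ℕ (⊤ : α) = n)
    (K : Type*) [Field K]
    (hH : Nontrivial (ReducedHomology K (properPart α) (n - 1)))
    (M : Set α)
    (hM : M = {x | ∃ c, grade ℕ c = n - 1 ∧
        Nontrivial (ReducedHomology K (Set.Ioo (⊥ : α) c) (n - 2)) ∧ x ≤ c} ∪ {⊤}) :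
    (∀ x ∈ M, ∀ y ∈ M,
        (∃ z, IsGreatest {w ∈ M | w ≤ x ∧ w ≤ y} z) ∧
        (∃ z, IsLeast {w ∈ M | x ≤ w ∧ y ≤ w} z)) ∧
    (∀ C : Finset α, ↑C ⊆ M → IsChain (· ≤ ·) (C : Set α) →
        (∀ C' : Finset α, ↑C' ⊆ M → IsChain (· ≤ ·) (C' : Set α) → C ⊆ C' → C' = C) →
        C.card = n + 1) ∧
    (∀ c ∈ M, grade ℕ c = n - 1 →
        Nontrivial (ReducedHomology K (Set.Ioo (⊥ : α) c) (n - 2))) ∧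
    Nontrivial (ReducedHomology K (M \ {⊥, ⊤} : Set α) (n - 1)) := by
  classical
  have hgbot : grade ℕ (⊥ : α) = 0 := by
    have := grade_bot (𝕆 := ℕ) (α := α)
    simpa using this
  have hMtop : (⊤ : α) ∈ M := by rw [hM]; exact Or.inr rfl
  have hMmem : ∀ {x : α}, x ∈ M → x = ⊤ ∨ ∃ c, grade ℕ c = n - 1 ∧
      Nontrivial (ReducedHomology K (Set.Ioo (⊥ : α) c) (n - 2)) ∧ x ≤ c := by
    intro x hx
    rw [hM] at hx
    rcases hx with h | h
    · exact Or.inr h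
    · exact Or.inl h
  have hMof : ∀ {x c : α}, grade ℕ c = n - 1 →
      Nontrivial (ReducedHomology K (Set.Ioo (⊥ : α) c) (n - 2)) → x ≤ c → x ∈ M := by
    intro x c h1 h2 h3
    rw [hM]
    exact Or.inl ⟨c, h1, h2, h3⟩
  have htop_ne : ∀ {c : α}, grade ℕ c = n - 1 → c ≠ ⊤ := by
    intro c h heq
    rw [heq, hrank] at h
    omega
  -- existence of a good coatom, and the homology of the restriction
  have key : (∃ c : α, grade ℕ c = n - 1 ∧
        Nontrivial (ReducedHomology K (Set.Ioo (⊥ : α) c) (n - 2))) ∧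
      Nontrivial (ReducedHomology K (M \ {⊥, ⊤} : Set α) (n - 1)) := by
    rcases Nat.lt_or_ge n 2 with h2 | h2
    · -- n = 1
      have hn1 : n = 1 := by omega
      subst hn1
      have hIoo : ∀ x, x ∉ Set.Ioo (⊥ : α) (⊥ : α) := fun x hx => lt_asymm hx.1 hx.2
      refine ⟨⟨⊥, by rw [hgbot], nontrivial_homology_of_empty hIoo⟩, ?_⟩
      have hempty : ∀ x, x ∉ (M \ {⊥, ⊤} : Set α) := by
        intro x hx
        rcases hMmem hx.1 with rfl | ⟨c, hc1, hc2, hc3⟩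
        · exact hx.2 (Or.inr rfl)
        · have hcbot : c = ⊥ := by
            by_contra hne
            have := grade_pos_of_ne_bot hne
            omega
          exact hx.2 (Or.inl (le_bot_iff.1 (hcbot ▸ hc3)))
      exact nontrivial_homology_of_empty hempty
    · -- n ≥ 2
      obtain ⟨p, rfl⟩ : ∃ p, n = p + 2 := ⟨n - 2, by omega⟩
      have hrank' : grade ℕ (⊤ : α) = p + 2 := hrank
      have hH' : Nontrivial (ReducedHomology K (properPart α) (p + 1)) := hH
      obtain ⟨z, hz, hz0⟩ := exists_cycle hH'
      obtain ⟨σ₀, hσ₀⟩ := Finsupp.support_nonempty_iff.2 hz0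
      have hgood : ∀ {σ : OrderedSimplex (properPart α) (p+1)}, σ ∈ z.support →
          grade ℕ (σ.1 (Fin.last p)) = p + 1 ∧
            Nontrivial (ReducedHomology K (Set.Ioo (⊥:α) (σ.1 (Fin.last p))) p) :=
        fun hσ => support_coatom_good hrank' hz hσ
      constructor
      · obtain ⟨hg1, hg2⟩ := hgood hσ₀
        exact ⟨σ₀.1 (Fin.last p), hg1, hg2⟩
      · have hts : ∀ x ∈ (M \ {⊥, ⊤} : Set α), x ∈ properPart α := by
          intro x hx
          constructor
          · exact fun h => hx.2 (Or.inl h)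
          · exact fun h => hx.2 (Or.inr h)
        have hvert : ∀ σ : OrderedSimplex (properPart α) (p+1), σ ∈ z.support →
            ∀ i, σ.1 i ∈ (M \ {⊥, ⊤} : Set α) := by
          intro σ hσ i
          obtain ⟨hg1, hg2⟩ := hgood hσ
          have hle : σ.1 i ≤ σ.1 (Fin.last p) := σ.2.1.monotone (Fin.le_last i)
          refine ⟨hMof hg1 hg2 hle, ?_⟩
          intro hmem
          rcases hmem with h | h
          · exact (σ.2.2 i).1 h
          · exact (σ.2.2 i).2 h
        have hsupp : ∀ σ ∈ z.support,
            ∃ u : OrderedSimplex (M \ {⊥, ⊤} : Set α) (p+1), u.inclS hts = σ := by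
          intro σ hσ
          exact ⟨⟨σ.1, σ.2.1, hvert σ hσ⟩, OrderedSimplex.ext' rfl⟩
        have hcyc := mem_cycles_comap_incl hts hz hsupp
        have hne0 : Finsupp.comapDomain
            (fun u : OrderedSimplex (M \ {⊥, ⊤} : Set α) (p+1) => u.inclS hts) z
            (inclS_injective hts).injOn ≠ 0 := by
          intro h0
          have hu : OrderedSimplex.inclS
              (⟨σ₀.1, σ₀.2.1, hvert σ₀ hσ₀⟩ : OrderedSimplex (M \ {⊥, ⊤} : Set α) (p+1))
              hts = σ₀ :=
            OrderedSimplex.ext' rfl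
          have h1 : Finsupp.comapDomain
              (fun u : OrderedSimplex (M \ {⊥, ⊤} : Set α) (p+1) => u.inclS hts) z
              (inclS_injective hts).injOn ⟨σ₀.1, σ₀.2.1, hvert σ₀ hσ₀⟩ = z σ₀ := by
            exact (Finsupp.comapDomain_apply _ _ _ _).trans (congrArg z hu)
          rw [h0] at h1
          exact Finsupp.mem_support_iff.1 hσ₀ h1.symm
        refine nontrivial_of_cycle hcyc hne0 (simpBoundaries_eq_bot _ _ ?_)
        exact ⟨fun u => (no_simplex_properPart hrank' (by omega)).elim (u.inclS hts)⟩
  refine ⟨?_, ?_, ?_, key.2⟩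
  · -- meets and joins
    intro x hx y hy
    constructor
    · rcases hMmem hx with rfl | hxJ
      · exact ⟨y, ⟨hy, le_top, le_refl y⟩, fun w hw => hw.2.2⟩
      · rcases hMmem hy with rfl | hyJ
        · exact ⟨x, ⟨hx, le_refl x, le_top⟩, fun w hw => hw.2.1⟩
        · obtain ⟨c, hc1, hc2, hc3⟩ := hxJ
          exact ⟨x ⊓ y, ⟨hMof hc1 hc2 (le_trans inf_le_left hc3), inf_le_left, inf_le_right⟩,
            fun w hw => le_inf hw.2.1 hw.2.2⟩
    · by_cases hxy : x ⊔ y ∈ M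
      · exact ⟨x ⊔ y, ⟨hxy, le_sup_left, le_sup_right⟩, fun w hw => sup_le hw.2.1 hw.2.2⟩
      · refine ⟨⊤, ⟨hMtop, le_top, le_top⟩, fun w hw => ?_⟩
        rcases hMmem hw.1 with rfl | ⟨c, hc1, hc2, hc3⟩
        · exact le_refl ⊤
        · exact absurd (hMof hc1 hc2 (le_trans (sup_le hw.2.1 hw.2.2) hc3)) hxy
  · -- maximal chains have n + 1 elements
    intro C hCM hCch hCmax
    obtain ⟨⟨c₀, hc₀1, hc₀2⟩, _⟩ := key
    have hbotM : (⊥ : α) ∈ M := hMof hc₀1 hc₀2 bot_le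
    have hbotC : (⊥ : α) ∈ C := by
      have hsub : ↑(insert (⊥:α) C) ⊆ M := by
        rw [Finset.coe_insert]
        rintro w (rfl | hw)
        · exact hbotM
        · exact hCM hw
      have hch : IsChain (· ≤ ·) (↑(insert (⊥:α) C) : Set α) := by
        rw [Finset.coe_insert]
        exact hCch.insert fun b _ _ => Or.inl bot_le
      have h := hCmax (insert ⊥ C) hsub hch (Finset.subset_insert _ _)
      rw [← h]
      exact Finset.mem_insert_self _ _
    have htopC : (⊤ : α) ∈ C := by
      have hsub : ↑(insert (⊤:α) C) ⊆ M := by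
        rw [Finset.coe_insert]
        rintro w (rfl | hw)
        · exact hMtop
        · exact hCM hw
      have hch : IsChain (· ≤ ·) (↑(insert (⊤:α) C) : Set α) := by
        rw [Finset.coe_insert]
        exact hCch.insert fun b _ _ => Or.inr le_top
      have h := hCmax (insert ⊤ C) hsub hch (Finset.subset_insert _ _)
      rw [← h]
      exact Finset.mem_insert_self _ _
    have hinj : Set.InjOn (grade ℕ) (C : Set α) := by
      intro a ha b hb hab
      by_contra hne
      rcases hCch ha hb hne with h | h
      · have := grade_strictMono (𝕆 := ℕ) (lt_of_le_of_ne h hne)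
        omega
      · have := grade_strictMono (𝕆 := ℕ) (lt_of_le_of_ne h (Ne.symm hne))
        omega
    have himg : C.image (grade ℕ) = Finset.range (n+1) := by
      apply Finset.Subset.antisymm
      · intro k hk
        obtain ⟨x, hxC, rfl⟩ := Finset.mem_image.1 hk
        have hle : grade ℕ x ≤ grade ℕ (⊤ : α) := grade_strictMono.monotone le_top
        rw [hrank] at hle
        exact Finset.mem_range.2 (by omega)
      · intro k hk
        rw [Finset.mem_range] at hk
        by_contra hkim
        have hknot : ∀ x ∈ C, grade ℕ x ≠ k :=
          fun x hx h => hkim (Finset.mem_image.2 ⟨x, hx, h⟩)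
        have hk0 : k ≠ 0 := fun h => hknot ⊥ hbotC (by rw [hgbot, h])
        have hkn : k ≠ n := fun h => hknot ⊤ htopC (by rw [hrank, h])
        obtain ⟨a, haA, ha2⟩ := Finset.exists_max_image
          (C.filter (fun x => grade ℕ x < k)) (grade ℕ)
          ⟨⊥, Finset.mem_filter.2 ⟨hbotC, by rw [hgbot]; omega⟩⟩
        obtain ⟨b, hbB, hb2⟩ := Finset.exists_min_image
          (C.filter (fun x => k < grade ℕ x)) (grade ℕ)
          ⟨⊤, Finset.mem_filter.2 ⟨htopC, by rw [hrank]; omega⟩⟩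
        have haC : a ∈ C := (Finset.mem_filter.1 haA).1
        have hga : grade ℕ a < k := (Finset.mem_filter.1 haA).2
        have hbC : b ∈ C := (Finset.mem_filter.1 hbB).1
        have hgb : k < grade ℕ b := (Finset.mem_filter.1 hbB).2
        have hab : a < b := by
          have hne : a ≠ b := fun h => by rw [h] at hga; omega
          rcases hCch haC hbC hne with h | h
          · exact lt_of_le_of_ne h hne
          · have := grade_strictMono (𝕆 := ℕ) (lt_of_le_of_ne h (Ne.symm hne))
            omega
        have hA : ∀ x ∈ C, grade ℕ x < k → x ≤ a := by
          intro x hx hgx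
          have hgle := ha2 x (Finset.mem_filter.2 ⟨hx, hgx⟩)
          rcases eq_or_ne x a with rfl | hne
          · exact le_refl x
          · rcases hCch hx haC hne with h | h
            · exact h
            · have := grade_strictMono (𝕆 := ℕ) (lt_of_le_of_ne h hne.symm)
              omega
        have hB : ∀ x ∈ C, k < grade ℕ x → b ≤ x := by
          intro x hx hgx
          have hgle := hb2 x (Finset.mem_filter.2 ⟨hx, hgx⟩)
          rcases eq_or_ne b x with rfl | hne
          · exact le_refl b
          · rcases hCch hbC hx hne with h | h
            · exact h
            · have := grade_strictMono (𝕆 := ℕ) (lt_of_le_of_ne h hne.symm)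
              omega
        have hm : ∃ m, m ∈ M ∧ a < m ∧ m < b := by
          by_cases hbt : b = ⊤
          · rcases hMmem (hCM haC) with rfl | ⟨c', hc'1, hc'2, hc'3⟩
            · rw [hrank] at hga; omega
            · refine ⟨c', hMof hc'1 hc'2 (le_refl c'), ?_, ?_⟩
              · refine lt_of_le_of_ne hc'3 ?_
                intro h
                rw [h, hc'1] at hga
                omega
              · rw [hbt]
                exact lt_top_iff_ne_top.2 (htop_ne hc'1)
          · have hgap : ¬ a ⋖ b := by
              intro hcov
              have hcg := hcov.grade (𝕆 := ℕ)
              have := (Nat.covBy_iff_add_one_eq).1 hcg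
              omega
            obtain ⟨m, ham, hmb⟩ := (not_covBy_iff hab).1 hgap
            rcases hMmem (hCM hbC) with rfl | ⟨c', hc'1, hc'2, hc'3⟩
            · exact absurd rfl hbt
            · exact ⟨m, hMof hc'1 hc'2 (le_trans hmb.le hc'3), ham, hmb⟩
        obtain ⟨m, hmM, ham, hmb⟩ := hm
        have hch' : IsChain (· ≤ ·) (↑(insert m C) : Set α) := by
          rw [Finset.coe_insert]
          refine hCch.insert fun x hx _ => ?_
          rcases Nat.lt_or_ge (grade ℕ x) k with h | h
          · exact Or.inr (le_trans (hA x hx h) ham.le)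
          · have h' : k < grade ℕ x := lt_of_le_of_ne h (Ne.symm (hknot x hx))
            exact Or.inl (le_trans hmb.le (hB x hx h'))
        have hsub : ↑(insert m C) ⊆ M := by
          rw [Finset.coe_insert]
          rintro w (rfl | hw)
          · exact hmM
          · exact hCM hw
        have heq := hCmax (insert m C) hsub hch' (Finset.subset_insert _ _)
        have hmC : m ∈ C := by
          rw [← heq]
          exact Finset.mem_insert_self _ _
        rcases Nat.lt_trichotomy (grade ℕ m) k with h | h | h
        · exact absurd (hA m hmC h) (not_le_of_gt ham)
        · exact hknot m hmC h
        · exact absurd (hB m hmC h) (not_le_of_gt hmb)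
    rw [← Finset.card_image_of_injOn hinj, himg, Finset.card_range]
  · -- all coatoms of M are good
    intro c hc hgc
    rcases hMmem hc with rfl | ⟨c', h1, h2, h3⟩
    · exact absurd hgc (by rw [hrank]; omega)
    · have hcc : c = c' := by
        rcases lt_or_eq_of_le h3 with h | h
        · have := grade_strictMono (𝕆 := ℕ) h
          rw [hgc, h1] at this
          omega
        · exact h
      rw [hcc]
      exact h2
end

section
/- Let L be a finite graded lattice of rank n whose proper part has nonzero (n-2)-nd reduced homology over k. Then for every i, the number of i-dimensional faces of the order complex Δ(L̄) is at least the number of i-dimensional faces of the barycentric subdivision of the (n-1)-dimensional simplex, i.e., f_i(Δ(L̄)) ≥ Σ_{S ⊆ [n-1], |S| = i+1} α_n(S), where α_n(S) is the multinomial coefficient associated to S. -/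
set_option maxSynthPendingDepth 2

open Finset

variable {α : Type*}

section FV

variable [Lattice α] [GradeMinOrder ℕ α]

lemma fv_seq_grades {k lo : ℕ} (g : Fin k → ℕ) (hm : StrictMono g)
    (hmem : ∀ i, lo < g i ∧ g i < lo + k + 1) : ∀ i : Fin k, g i = lo + 1 + (i : ℕ) := by
  have h1 : ∀ (v : ℕ) (h : v < k), lo + 1 + v ≤ g ⟨v, h⟩ := by
    intro v
    induction v with
    | zero => intro h; have := (hmem ⟨0, h⟩).1; omega
    | succ w ih =>
      intro h
      have hw : w < k := by omega
      have h1 := ih hw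
      have hlt : g ⟨w, hw⟩ < g ⟨w + 1, h⟩ := hm (by simp [Fin.lt_def])
      omega
  have h2 : ∀ (d : ℕ) (v : ℕ) (h : v < k), k - 1 - v = d → g ⟨v, h⟩ ≤ lo + k - d := by
    intro d
    induction d with
    | zero => intro v h _; have := (hmem ⟨v, h⟩).2; omega
    | succ e ih =>
      intro v h hd
      have hv1 : v + 1 < k := by omega
      have h1 := ih (v + 1) hv1 (by omega)
      have hlt : g ⟨v, h⟩ < g ⟨v + 1, hv1⟩ := hm (by simp [Fin.lt_def])
      omega
  intro i
  have a1 := h1 i.1 i.2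
  have a2 := h2 (k - 1 - i.1) i.1 i.2 rfl
  have : (⟨i.1, i.2⟩ : Fin k) = i := by ext; rfl
  rw [this] at a1 a2
  have := i.2
  omega

lemma fv_chain_lt {C : Finset α} (hC : IsChain (· ≤ ·) (C : Set α)) {u v : α}
    (hu : u ∈ C) (hv : v ∈ C) (h : grade ℕ u < grade ℕ v) : u < v := by
  rcases eq_or_ne u v with rfl | hne
  · exact absurd h (lt_irrefl _)
  · rcases hC hu hv hne with hle | hle
    · exact lt_of_le_of_ne hle hne
    · exact absurd (grade_strictMono (lt_of_le_of_ne hle hne.symm)) (not_lt.2 h.le)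

lemma fv_grade_injOn_chain {C : Finset α} (hC : IsChain (· ≤ ·) (C : Set α)) :
    Set.InjOn (grade ℕ) (C : Set α) := by
  intro x hx y hy hxy
  by_contra hne
  rcases hC hx hy hne with h | h
  · exact absurd hxy (ne_of_lt (grade_strictMono (lt_of_le_of_ne h hne)))
  · exact absurd hxy.symm (ne_of_lt (grade_strictMono (lt_of_le_of_ne h (Ne.symm hne))))

variable [DecidableEq α]

lemma fv_image_erase {C : Finset α} (hinj : Set.InjOn (grade ℕ) (C : Set α)) {u : α}
    (hu : u ∈ C) :
    (C.erase u).image (grade ℕ) = (C.image (grade ℕ)).erase (grade ℕ u) := by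
  ext r
  simp only [mem_image, mem_erase]
  constructor
  · rintro ⟨w, ⟨hwu, hwC⟩, rfl⟩
    exact ⟨fun h => hwu (hinj hwC hu h), ⟨w, hwC, rfl⟩⟩
  · rintro ⟨hru, w, hwC, rfl⟩
    exact ⟨w, ⟨fun h => hru (by rw [h]), hwC⟩, rfl⟩

/-- A taut web of full chains between `b` and `tp`. -/
def FVWeb (b tp : α) (𝒞 : Set (Finset α)) : Prop :=
  𝒞.Nonempty ∧
  (∀ C ∈ 𝒞, IsChain (· ≤ ·) (C : Set α) ∧ (C : Set α) ⊆ Set.Ioo b tp ∧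
     C.image (grade ℕ) = Finset.Ioo (grade ℕ b) (grade ℕ tp)) ∧
  (∀ C ∈ 𝒞, ∀ u ∈ C, ∃ x, x ≠ u ∧ insert x (C.erase u) ∈ 𝒞)

lemma FVWeb.taut' {b tp : α} {𝒞 : Set (Finset α)} (hW : FVWeb b tp 𝒞) {C : Finset α}
    (hC : C ∈ 𝒞) {u : α} (hu : u ∈ C) :
    ∃ x, x ≠ u ∧ x ∉ C.erase u ∧ grade ℕ x = grade ℕ u ∧ insert x (C.erase u) ∈ 𝒞 := by
  obtain ⟨x, hxu, hC'⟩ := hW.2.2 C hC u hu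
  obtain ⟨hch, _, him⟩ := hW.2.1 C hC
  obtain ⟨hch', _, him'⟩ := hW.2.1 _ hC'
  have hime : (C.erase u).image (grade ℕ) = (Finset.Ioo (grade ℕ b) (grade ℕ tp)).erase (grade ℕ u) := by
    rw [fv_image_erase (fv_grade_injOn_chain hch) hu, him]
  have hgu : grade ℕ u ∈ Finset.Ioo (grade ℕ b) (grade ℕ tp) := him ▸ mem_image_of_mem _ hu
  have hxe : x ∉ C.erase u := by
    intro hx
    rw [Finset.insert_eq_self.2 hx, hime] at him'
    have : grade ℕ u ∈ (Finset.Ioo (grade ℕ b) (grade ℕ tp)).erase (grade ℕ u) := by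
      rw [him']; exact hgu
    simp at this
  have hgx : grade ℕ x = grade ℕ u := by
    rw [Finset.image_insert, hime] at him'
    have hmem2 : grade ℕ u ∈ insert (grade ℕ x)
        ((Finset.Ioo (grade ℕ b) (grade ℕ tp)).erase (grade ℕ u)) := by
      rw [him']; exact hgu
    rcases mem_insert.1 hmem2 with h | h
    · exact h.symm
    · exact absurd h (by simp)
  exact ⟨x, hxu, hxe, hgx, hC'⟩

/-- The set of elements at level `t` above `b` covered by the web. -/
def fvLev (b : α) (t : ℕ) (𝒞 : Set (Finset α)) : Set α :=
  {x | grade ℕ x = grade ℕ b + t ∧ ∃ C ∈ 𝒞, x ∈ C}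

lemma fv_mem_of_level {b tp : α} {𝒞 : Set (Finset α)} (hW : FVWeb b tp 𝒞) {C : Finset α}
    (hC : C ∈ 𝒞) {r : ℕ} (h1 : grade ℕ b < r) (h2 : r < grade ℕ tp) :
    ∃ u ∈ C, grade ℕ u = r := by
  obtain ⟨_, _, him⟩ := hW.2.1 C hC
  have : r ∈ C.image (grade ℕ) := by rw [him]; simp [h1, h2]
  simpa [mem_image] using this

end FV
section FV2

variable [Lattice α] [GradeMinOrder ℕ α] [DecidableEq α]

lemma fv_two_at_level {b tp : α} {𝒞 : Set (Finset α)} (hW : FVWeb b tp 𝒞) {t : ℕ}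
    (ht : 0 < t) (htm : grade ℕ b + t < grade ℕ tp) :
    ∃ x y, x ≠ y ∧ x ∈ fvLev b t 𝒞 ∧ y ∈ fvLev b t 𝒞 := by
  obtain ⟨C, hC⟩ := hW.1
  obtain ⟨u, hu, hgu⟩ := fv_mem_of_level hW hC (by omega) htm
  obtain ⟨x, hxu, _, hgx, hC'⟩ := hW.taut' hC hu
  exact ⟨x, u, hxu, ⟨by rw [hgx, hgu], _, hC', mem_insert_self _ _⟩, ⟨hgu, C, hC, hu⟩⟩

/-- The restriction of a web below a top-level element `y`. -/
lemma fv_upperWeb {b tp : α} {𝒞 : Set (Finset α)} (hW : FVWeb b tp 𝒞) {y : α}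
    (hygr : grade ℕ y + 1 = grade ℕ tp) (hymem : ∃ C ∈ 𝒞, y ∈ C) :
    FVWeb b y {D | ∃ C ∈ 𝒞, y ∈ C ∧ D = C.erase y} := by
  have hmain : ∀ C ∈ 𝒞, y ∈ C → IsChain (· ≤ ·) ((C.erase y : Finset α) : Set α) ∧
      ((C.erase y : Finset α) : Set α) ⊆ Set.Ioo b y ∧
      (C.erase y).image (grade ℕ) = Finset.Ioo (grade ℕ b) (grade ℕ y) := by
    intro C hC hyC
    obtain ⟨hch, hsub, him⟩ := hW.2.1 C hC
    have hsub' : ((C.erase y : Finset α) : Set α) ⊆ (C : Set α) := by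
      intro w hw; simp only [coe_erase, Set.mem_diff] at hw; exact hw.1
    refine ⟨hch.mono hsub', ?_, ?_⟩
    · intro w hw
      simp only [coe_erase, Set.mem_diff, Set.mem_singleton_iff] at hw
      obtain ⟨hwC, hwy⟩ := hw
      have hb : b < w := (hsub hwC).1
      have hgw : grade ℕ w ∈ Finset.Ioo (grade ℕ b) (grade ℕ tp) :=
        him ▸ mem_image_of_mem _ (by exact_mod_cast hwC)
      have hne : grade ℕ w ≠ grade ℕ y :=
        fun h => hwy (fv_grade_injOn_chain hch hwC (by exact_mod_cast hyC) h)
      have hlt : grade ℕ w < grade ℕ y := by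
        simp only [mem_Ioo] at hgw; omega
      exact ⟨hb, fv_chain_lt hch (by exact_mod_cast hwC) (by exact_mod_cast hyC) hlt⟩
    · rw [fv_image_erase (fv_grade_injOn_chain hch) hyC, him]
      ext r
      simp only [mem_erase, mem_Ioo]
      omega
  refine ⟨?_, ?_, ?_⟩
  · obtain ⟨C, hC, hyC⟩ := hymem
    exact ⟨C.erase y, C, hC, hyC, rfl⟩
  · rintro D ⟨C, hC, hyC, rfl⟩
    exact hmain C hC hyC
  · rintro D ⟨C, hC, hyC, rfl⟩ u hu
    have huy : u ≠ y := (mem_erase.1 hu).1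
    have huC : u ∈ C := (mem_erase.1 hu).2
    obtain ⟨x, hxu, hxe, hgx, hC'⟩ := hW.taut' hC huC
    have hgunr : grade ℕ u ≠ grade ℕ y := by
      obtain ⟨hch, _, _⟩ := hW.2.1 C hC
      exact fun h => huy (fv_grade_injOn_chain hch (by exact_mod_cast huC)
        (by exact_mod_cast hyC) h)
    have hxy : x ≠ y := fun h => hgunr (by rw [← hgx, h])
    refine ⟨x, hxu, C.erase u |> fun _ => ?_⟩
    refine ⟨insert x (C.erase u), hC', mem_insert_of_mem (mem_erase.2 ⟨Ne.symm huy, hyC⟩), ?_⟩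
    rw [Finset.erase_insert_of_ne hxy, Finset.erase_right_comm]

/-- The restriction of a web above an element `x` fixing the lower part of a witness chain. -/
lemma fv_lowerWeb {b tp : α} {𝒞 : Set (Finset α)} (hW : FVWeb b tp 𝒞) {x : α} {C₀ : Finset α}
    (hC₀ : C₀ ∈ 𝒞) (hx : x ∈ C₀) (hxtp : grade ℕ x < grade ℕ tp) :
    FVWeb x tp {D | ∃ C ∈ 𝒞, C.filter (fun w => grade ℕ w ≤ grade ℕ x) =
      C₀.filter (fun w => grade ℕ w ≤ grade ℕ x) ∧
      D = C.filter (fun w => grade ℕ x < grade ℕ w)} := by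
  have hgxIoo : grade ℕ x ∈ Finset.Ioo (grade ℕ b) (grade ℕ tp) :=
    (hW.2.1 C₀ hC₀).2.2 ▸ mem_image_of_mem _ hx
  have hgxb : grade ℕ b < grade ℕ x := (mem_Ioo.1 hgxIoo).1
  have hxmem : ∀ C ∈ 𝒞, C.filter (fun w => grade ℕ w ≤ grade ℕ x) =
      C₀.filter (fun w => grade ℕ w ≤ grade ℕ x) → x ∈ C := by
    intro C hC hfil
    have : x ∈ C.filter (fun w => grade ℕ w ≤ grade ℕ x) := by
      rw [hfil]; exact mem_filter.2 ⟨hx, le_refl _⟩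
    exact (mem_filter.1 this).1
  have hmain : ∀ C ∈ 𝒞, x ∈ C →
      IsChain (· ≤ ·) ((C.filter (fun w => grade ℕ x < grade ℕ w) : Finset α) : Set α) ∧
      ((C.filter (fun w => grade ℕ x < grade ℕ w) : Finset α) : Set α) ⊆ Set.Ioo x tp ∧
      (C.filter (fun w => grade ℕ x < grade ℕ w)).image (grade ℕ) =
        Finset.Ioo (grade ℕ x) (grade ℕ tp) := by
    intro C hC hxC
    obtain ⟨hch, hsub, him⟩ := hW.2.1 C hC
    have hsub' : ((C.filter (fun w => grade ℕ x < grade ℕ w) : Finset α) : Set α) ⊆ (C : Set α) := by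
      intro w hw; simp only [coe_filter, Set.mem_setOf_eq] at hw; exact hw.1
    refine ⟨hch.mono hsub', ?_, ?_⟩
    · intro w hw
      simp only [coe_filter, Set.mem_setOf_eq] at hw
      obtain ⟨hwC, hgw⟩ := hw
      exact ⟨fv_chain_lt hch (by exact_mod_cast hxC) (by exact_mod_cast hwC) hgw,
        (hsub hwC).2⟩
    · have : C.filter (fun w => grade ℕ x < grade ℕ w) =
          C.filter (fun w => (fun r => grade ℕ x < r) (grade ℕ w)) := rfl
      rw [this, ← Finset.filter_image, him]
      ext r
      simp only [mem_filter, mem_Ioo]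
      omega
  refine ⟨?_, ?_, ?_⟩
  · exact ⟨C₀.filter (fun w => grade ℕ x < grade ℕ w), C₀, hC₀, rfl, rfl⟩
  · rintro D ⟨C, hC, hfil, rfl⟩
    exact hmain C hC (hxmem C hC hfil)
  · rintro D ⟨C, hC, hfil, rfl⟩ u hu
    have huC : u ∈ C := (mem_filter.1 hu).1
    have hgu : grade ℕ x < grade ℕ u := (mem_filter.1 hu).2
    obtain ⟨x', hx'u, hx'e, hgx', hC'⟩ := hW.taut' hC huC
    refine ⟨x', hx'u, ?_⟩
    refine ⟨insert x' (C.erase u), hC', ?_, ?_⟩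
    · rw [← hfil]
      ext w
      simp only [mem_filter, mem_insert, mem_erase]
      constructor
      · rintro ⟨h | ⟨hwu, hwC⟩, hle⟩
        · subst h; omega
        · exact ⟨hwC, hle⟩
      · rintro ⟨hwC, hle⟩
        have hwu : w ≠ u := fun h => by subst h; omega
        exact ⟨Or.inr ⟨hwu, hwC⟩, hle⟩
    · ext w
      simp only [mem_filter, mem_insert, mem_erase]
      constructor
      · rintro (rfl | ⟨hwu, hwC, hlt⟩)
        · exact ⟨Or.inl rfl, by omega⟩
        · exact ⟨Or.inr ⟨hwu, hwC⟩, hlt⟩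
      · rintro ⟨rfl | ⟨hwu, hwC⟩, hlt⟩
        · exact Or.inl rfl
        · exact Or.inr ⟨hwu, hwC, hlt⟩

end FV2
section FV3

variable [Lattice α] [GradeMinOrder ℕ α] [DecidableEq α] [Fintype α]

lemma fv_exists_pair {b tp : α} {𝒞 : Set (Finset α)} (hW : FVWeb b tp 𝒞) {m : ℕ}
    (hm : grade ℕ tp = grade ℕ b + m) (h2 : 2 ≤ m) :
    ∃ a y, a ∈ fvLev b 1 𝒞 ∧ y ∈ fvLev b (m - 1) 𝒞 ∧ ¬ a ≤ y := by
  by_contra hcon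
  push_neg at hcon
  classical
  have hfin : (fvLev b 1 𝒞).Finite := Set.toFinite _
  have hG1 : hfin.toFinset.Nonempty := by
    obtain ⟨C, hC⟩ := hW.1
    obtain ⟨u, hu, hgu⟩ := fv_mem_of_level hW hC (r := grade ℕ b + 1) (by omega) (by omega)
    exact ⟨u, hfin.mem_toFinset.2 ⟨hgu, C, hC, hu⟩⟩
  set J := hfin.toFinset.sup' hG1 id with hJ
  have hJle : ∀ y ∈ fvLev b (m - 1) 𝒞, J ≤ y := by
    intro y hy
    exact Finset.sup'_le _ _ (fun a ha => hcon a y (hfin.mem_toFinset.1 ha) hy)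
  have hup : ∀ k, 1 ≤ k → k ≤ m - 1 → ∀ u ∈ fvLev b k 𝒞, u ≤ J := by
    intro k
    induction k with
    | zero => omega
    | succ k ih =>
      intro _ hk u hu
      rcases Nat.eq_zero_or_pos k with hk0 | hk1
      · subst hk0
        exact Finset.le_sup' id (hfin.mem_toFinset.2 hu)
      · obtain ⟨hgu, C, hC, huC⟩ := hu
        obtain ⟨hch, hsub, him⟩ := hW.2.1 C hC
        obtain ⟨v, hvC, hgv⟩ :=
          fv_mem_of_level hW hC (show grade ℕ b < grade ℕ b + k by omega) (by omega)
        obtain ⟨x', hx'v, hx'e, hgx', hC'⟩ := hW.taut' hC hvC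
        obtain ⟨hch', _, _⟩ := hW.2.1 _ hC'
        have hvu : v < u := fv_chain_lt hch hvC huC (by omega)
        have huv : u ≠ v := fun h => by rw [h] at hgu; omega
        have huC' : u ∈ insert x' (C.erase v) := mem_insert_of_mem (mem_erase.2 ⟨huv, huC⟩)
        have hx'u : x' < u :=
          fv_chain_lt hch' (by exact_mod_cast mem_insert_self x' _) (by exact_mod_cast huC')
            (by rw [hgx', hgv, hgu]; omega)
        have hvJ : v ≤ J := ih hk1 (by omega) v ⟨hgv, C, hC, hvC⟩
        have hxJ : x' ≤ J := ih hk1 (by omega) x'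
          ⟨by rw [hgx', hgv], _, hC', mem_insert_self _ _⟩
        have hjoin : v ⊔ x' = u := by
          have hle : v ⊔ x' ≤ u := sup_le hvu.le hx'u.le
          have hvlt : v < v ⊔ x' := by
            rcases lt_or_eq_of_le (le_sup_left : v ≤ v ⊔ x') with h | h
            · exact h
            · exfalso
              have hxv : x' ≤ v := le_sup_right.trans h.ge
              rcases lt_or_eq_of_le hxv with h' | h'
              · have := grade_strictMono (𝕆 := ℕ) h'
                rw [hgx', hgv] at this; omega
              · exact hx'v h'
          rcases lt_or_eq_of_le hle with h | h
          · exfalso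
            have h1 := grade_strictMono (𝕆 := ℕ) hvlt
            have h2 := grade_strictMono (𝕆 := ℕ) h
            rw [hgv] at h1; rw [hgu] at h2; omega
          · exact h
        calc u = v ⊔ x' := hjoin.symm
        _ ≤ J := sup_le hvJ hxJ
  obtain ⟨y1, y2, hne, hy1, hy2⟩ := fv_two_at_level hW (t := m - 1) (by omega) (by omega)
  have h1 : y1 = J := le_antisymm (hup (m - 1) (by omega) le_rfl y1 hy1) (hJle y1 hy1)
  have h2' : y2 = J := le_antisymm (hup (m - 1) (by omega) le_rfl y2 hy2) (hJle y2 hy2)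
  exact hne (h1.trans h2'.symm)

lemma fv_web_count : ∀ m : ℕ, ∀ b tp : α, grade ℕ tp = grade ℕ b + m →
    ∀ 𝒞 : Set (Finset α), FVWeb b tp 𝒞 → ∀ t, 0 < t → t < m →
    m.choose t ≤ (fvLev b t 𝒞).ncard := by
  intro m
  induction m using Nat.strong_induction_on with
  | _ m ih =>
    intro b tp hm 𝒞 hW t ht htm
    by_cases hm3 : m < 3
    · -- m = 2, t = 1
      have hm2 : m = 2 := by omega
      have ht1 : t = 1 := by omega
      subst hm2; subst ht1
      obtain ⟨x, y, hne, hx, hy⟩ := fv_two_at_level hW (t := 1) (by omega) (by omega)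
      have hsub : ({x, y} : Set α) ⊆ fvLev b 1 𝒞 := by
        intro w hw; rcases hw with rfl | hw
        · exact hx
        · rw [Set.mem_singleton_iff] at hw; subst hw; exact hy
      calc (2 : ℕ).choose 1 = 2 := by norm_num
      _ = ({x, y} : Set α).ncard := (Set.ncard_pair hne).symm
      _ ≤ (fvLev b 1 𝒞).ncard := Set.ncard_le_ncard hsub (Set.toFinite _)
    · obtain ⟨a, y, ha, hy, hay⟩ := fv_exists_pair hW hm (by omega)
      obtain ⟨hga, Ca, hCa, haCa⟩ := ha
      obtain ⟨hgy, Cy, hCy, hyCy⟩ := hy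
      have hP1 : (m - 1).choose t ≤ (fvLev b t 𝒞 ∩ {w | w ≤ y}).ncard := by
        by_cases htop : t = m - 1
        · subst htop
          have : ({y} : Set α) ⊆ fvLev b (m - 1) 𝒞 ∩ {w | w ≤ y} := by
            intro w hw; rw [Set.mem_singleton_iff] at hw; subst hw
            exact ⟨⟨hgy, Cy, hCy, hyCy⟩, le_refl _⟩
          calc (m - 1).choose (m - 1) = 1 := Nat.choose_self _
          _ ≤ _ := le_trans (le_of_eq (Set.ncard_singleton y).symm)
            (Set.ncard_le_ncard this (Set.toFinite _))
        · have hWy : FVWeb b y {D | ∃ C ∈ 𝒞, y ∈ C ∧ D = C.erase y} :=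
            fv_upperWeb hW (by omega) ⟨Cy, hCy, hyCy⟩
          have hcount := ih (m - 1) (by omega) b y (by omega) _ hWy t ht (by omega)
          refine le_trans hcount (Set.ncard_le_ncard ?_ (Set.toFinite _))
          rintro w ⟨hgw, D, ⟨C, hC, hyC, rfl⟩, hwD⟩
          have hwIoo : w ∈ Set.Ioo b y := (hWy.2.1 _ ⟨C, hC, hyC, rfl⟩).2.1 (by exact_mod_cast hwD)
          exact ⟨⟨hgw, C, hC, (mem_erase.1 hwD).2⟩, le_of_lt hwIoo.2⟩
      have hP2 : (m - 1).choose (t - 1) ≤ (fvLev b t 𝒞 ∩ {w | a ≤ w}).ncard := by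
        by_cases hbot : t = 1
        · subst hbot
          have : ({a} : Set α) ⊆ fvLev b 1 𝒞 ∩ {w | a ≤ w} := by
            intro w hw; rw [Set.mem_singleton_iff] at hw; subst hw
            exact ⟨⟨hga, Ca, hCa, haCa⟩, le_refl _⟩
          calc (m - 1).choose 0 = 1 := Nat.choose_zero_right _
          _ ≤ _ := le_trans (le_of_eq (Set.ncard_singleton a).symm)
            (Set.ncard_le_ncard this (Set.toFinite _))
        · have hWa := fv_lowerWeb hW hCa haCa (by omega)
          have hcount := ih (m - 1) (by omega) a tp (by rw [hm, hga]; omega) _ hWa (t - 1)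
            (by omega) (by omega)
          refine le_trans hcount (Set.ncard_le_ncard ?_ (Set.toFinite _))
          rintro w ⟨hgw, D, ⟨C, hC, hfil, rfl⟩, hwD⟩
          have hwIoo : w ∈ Set.Ioo a tp :=
            (hWa.2.1 _ ⟨C, hC, hfil, rfl⟩).2.1 (by exact_mod_cast hwD)
          exact ⟨⟨by rw [hgw, hga]; omega, C, hC, (mem_filter.1 hwD).1⟩, le_of_lt hwIoo.1⟩
      have hdisj : Disjoint (fvLev b t 𝒞 ∩ {w | w ≤ y}) (fvLev b t 𝒞 ∩ {w | a ≤ w}) := by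
        rw [Set.disjoint_left]
        rintro w ⟨_, hwy⟩ ⟨_, haw⟩
        exact hay (le_trans haw hwy)
      have hchoose : m.choose t = (m - 1).choose t + (m - 1).choose (t - 1) := by
        obtain ⟨M, rfl⟩ : ∃ M, m = M + 1 := ⟨m - 1, by omega⟩
        obtain ⟨T, rfl⟩ : ∃ T, t = T + 1 := ⟨t - 1, by omega⟩
        simp [Nat.choose_succ_succ]
        omega
      calc m.choose t = (m - 1).choose t + (m - 1).choose (t - 1) := hchoose
      _ ≤ (fvLev b t 𝒞 ∩ {w | w ≤ y}).ncard + (fvLev b t 𝒞 ∩ {w | a ≤ w}).ncard :=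
          Nat.add_le_add hP1 hP2
      _ = ((fvLev b t 𝒞 ∩ {w | w ≤ y}) ∪ (fvLev b t 𝒞 ∩ {w | a ≤ w})).ncard :=
          (Set.ncard_union_eq hdisj (Set.toFinite _) (Set.toFinite _)).symm
      _ ≤ (fvLev b t 𝒞).ncard := Set.ncard_le_ncard (by
          rintro w (⟨hw, _⟩ | ⟨hw, _⟩) <;> exact hw) (Set.toFinite _)

end FV3
section FV4

lemma fv_sum_ncard_le {ι β : Type*} (F : Finset ι) (A : ι → Set β) (T : Set β) (hT : T.Finite)
    (hsub : ∀ i ∈ F, A i ⊆ T)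
    (hdisj : ∀ i ∈ F, ∀ j ∈ F, i ≠ j → Disjoint (A i) (A j)) :
    ∑ i ∈ F, (A i).ncard ≤ T.ncard := by
  classical
  induction F using Finset.induction_on generalizing T with
  | empty => simp
  | @insert i F hiF ihF =>
    rw [Finset.sum_insert hiF]
    have hAi : A i ⊆ T := hsub i (mem_insert_self _ _)
    have hrest : ∀ j ∈ F, A j ⊆ T \ A i := by
      intro j hj x hx
      refine ⟨hsub j (mem_insert_of_mem hj) hx, ?_⟩
      intro hxi
      exact (Set.disjoint_left.1 (hdisj j (mem_insert_of_mem hj) i (mem_insert_self _ _)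
        (fun h => hiF (h ▸ hj)))) hx hxi
    have h1 := ihF (T \ A i) hT.diff hrest
      (fun j hj j' hj' hne => hdisj j (mem_insert_of_mem hj) j' (mem_insert_of_mem hj') hne)
    have h2 : (T \ A i).ncard + (A i).ncard = T.ncard :=
      Set.ncard_diff_add_ncard_of_subset hAi hT
    omega

variable [Lattice α] [GradeMinOrder ℕ α] [DecidableEq α] [Fintype α]

/-- Chains in the open interval `(b, tp)` with prescribed grade image. -/
def fvChains (b tp : α) (S : Finset ℕ) : Set (Finset α) :=
  {C | IsChain (· ≤ ·) (C : Set α) ∧ (C : Set α) ⊆ Set.Ioo b tp ∧ C.image (grade ℕ) = S}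

/-- The product of binomial coefficients counting flags. -/
def fvQ : ℕ → ℕ → List ℕ → ℕ
  | _, _, [] => 1
  | lo, hi, s :: l => (hi - lo).choose (s - lo) * fvQ s hi l

lemma fv_flag_count (tp : α) :
    ∀ l : List ℕ, l.Pairwise (· < ·) → ∀ (b : α) (𝒞 : Set (Finset α)), FVWeb b tp 𝒞 →
    (∀ s ∈ l, grade ℕ b < s ∧ s < grade ℕ tp) →
    fvQ (grade ℕ b) (grade ℕ tp) l ≤ (fvChains b tp l.toFinset).ncard := by
  intro l
  induction l with
  | nil =>
    intro _ b 𝒞 hW _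
    have hmem : (∅ : Finset α) ∈ fvChains b tp (∅ : Finset ℕ) := by
      refine ⟨by simp [IsChain], by simp, by simp⟩
    simp only [fvQ, List.toFinset_nil]
    rw [← Set.ncard_singleton (∅ : Finset α)]
    exact Set.ncard_le_ncard (by intro w hw; rwa [Set.mem_singleton_iff.1 hw]) (Set.toFinite _)
  | cons s l' IH =>
    intro hsort b 𝒞 hW hbounds
    have hs := hbounds s (List.mem_cons_self)
    set lo := grade ℕ b with hlo
    set hi := grade ℕ tp with hhi
    have hm : hi = lo + (hi - lo) := by omega
    set t := s - lo with htdef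
    have hts : lo + t = s := by omega
    have ht : 0 < t := by omega
    have htm : t < hi - lo := by omega
    have hlev := fv_web_count (hi - lo) b tp hm 𝒞 hW t ht htm
    -- per-element construction
    have key : ∀ x ∈ fvLev b t 𝒞,
        fvQ s hi l' ≤ (fvChains x tp l'.toFinset).ncard ∧ grade ℕ x = s ∧ x ∈ Set.Ioo b tp := by
      intro x hx
      obtain ⟨hgx, C₀, hC₀, hxC₀⟩ := hx
      have hgx' : grade ℕ x = s := by rw [hgx, hts]
      have hxIoo : x ∈ Set.Ioo b tp := (hW.2.1 C₀ hC₀).2.1 (by exact_mod_cast hxC₀)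
      have hWx := fv_lowerWeb hW hC₀ hxC₀ (by rw [hgx']; omega)
      have hIH := IH hsort.of_cons x _ hWx (by
        intro s' hs'
        have := hbounds s' (List.mem_cons_of_mem _ hs')
        have hss' : s < s' := (List.pairwise_cons.1 hsort).1 s' hs'
        rw [hgx']
        exact ⟨hss', this.2⟩)
      rw [hgx'] at hIH
      exact ⟨hIH, hgx', hxIoo⟩
    -- map each pair (x, D) to insert x D
    classical
    have hfin : (fvLev b t 𝒞).Finite := Set.toFinite _
    set F := hfin.toFinset with hF
    set A : α → Set (Finset α) := fun x => (insert x) '' (fvChains x tp l'.toFinset) with hA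
    have hsubT : ∀ x ∈ F, A x ⊆ fvChains b tp (s :: l').toFinset := by
      intro x hxF E hE
      have hx := hfin.mem_toFinset.1 hxF
      obtain ⟨_, hgx, hxIoo⟩ := key x hx
      obtain ⟨D, ⟨hDch, hDsub, hDim⟩, rfl⟩ := hE
      have hxD : ∀ w ∈ D, x < w := fun w hw => (hDsub (by exact_mod_cast hw)).1
      refine ⟨?_, ?_, ?_⟩
      · rw [Finset.coe_insert]
        exact hDch.insert (fun w hw _ => Or.inl (hxD w (by exact_mod_cast hw)).le)
      · rw [Finset.coe_insert]
        intro w hw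
        rcases hw with rfl | hw
        · exact hxIoo
        · have := hDsub hw
          exact ⟨lt_trans hxIoo.1 this.1, this.2⟩
      · rw [Finset.image_insert, hDim, hgx, List.toFinset_cons]
    have hDisj : ∀ x ∈ F, ∀ x' ∈ F, x ≠ x' → Disjoint (A x) (A x') := by
      intro x hxF x' hx'F hne
      rw [Set.disjoint_left]
      rintro E hEx hEx'
      have hEch : IsChain (· ≤ ·) (E : Set α) := (hsubT x hxF hEx).1
      obtain ⟨_, hgx, _⟩ := key x (hfin.mem_toFinset.1 hxF)
      obtain ⟨_, hgx', _⟩ := key x' (hfin.mem_toFinset.1 hx'F)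
      obtain ⟨D, hD, rfl⟩ := hEx
      obtain ⟨D', hD', hEE⟩ := hEx'
      have hxE : x ∈ insert x D := mem_insert_self _ _
      have hx'E : x' ∈ insert x D := by rw [← hEE]; exact mem_insert_self _ _
      exact hne (fv_grade_injOn_chain hEch (by exact_mod_cast hxE) (by exact_mod_cast hx'E)
        (by rw [hgx, hgx']))
    have hcard : ∀ x ∈ F, fvQ s hi l' ≤ (A x).ncard := by
      intro x hxF
      have hx := hfin.mem_toFinset.1 hxF
      obtain ⟨hcount, hgx, _⟩ := key x hx
      have hinj : Set.InjOn (insert x) (fvChains x tp l'.toFinset) := by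
        intro D hD D' hD' hEE
        have hxD : x ∉ D := fun h => absurd ((hD.2.1 (by exact_mod_cast h)).1) (lt_irrefl x)
        have hxD' : x ∉ D' := fun h => absurd ((hD'.2.1 (by exact_mod_cast h)).1) (lt_irrefl x)
        rw [← Finset.erase_insert hxD, ← Finset.erase_insert hxD', hEE]
      rw [hA]
      simp only
      rw [Set.ncard_image_of_injOn hinj]
      exact hcount
    have hsum := fv_sum_ncard_le F A (fvChains b tp (s :: l').toFinset) (Set.toFinite _)
      hsubT hDisj
    have hFcard : F.card = (fvLev b t 𝒞).ncard := (Set.ncard_eq_toFinset_card _ hfin).symm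
    calc fvQ lo hi (s :: l') = (hi - lo).choose t * fvQ s hi l' := rfl
    _ ≤ (fvLev b t 𝒞).ncard * fvQ s hi l' := Nat.mul_le_mul_right _ hlev
    _ = ∑ _x ∈ F, fvQ s hi l' := by rw [Finset.sum_const, smul_eq_mul, hFcard, mul_comm]
    _ ≤ ∑ x ∈ F, (A x).ncard := Finset.sum_le_sum hcard
    _ ≤ (fvChains b tp (s :: l').toFinset).ncard := hsum

end FV4
section FV5

lemma fv_denom_pos : ∀ (l : List ℕ) (lo hi : ℕ),
    0 < ((l ++ [hi]).zipWith (fun b a => (b - a).factorial) (lo :: l)).prod := by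
  intro l
  induction l with
  | nil => intro lo hi; simp [Nat.factorial_pos]
  | cons s l' IH =>
    intro lo hi
    simp only [List.cons_append, List.zipWith_cons_cons, List.prod_cons]
    exact Nat.mul_pos (Nat.factorial_pos _) (IH s hi)

lemma fv_Q_mul : ∀ (l : List ℕ) (lo hi : ℕ), l.Pairwise (· < ·) →
    (∀ s ∈ l, lo < s ∧ s < hi) →
    fvQ lo hi l * ((l ++ [hi]).zipWith (fun b a => (b - a).factorial) (lo :: l)).prod
      = (hi - lo).factorial := by
  intro l
  induction l with
  | nil => intro lo hi _ _; simp [fvQ]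
  | cons s l' IH =>
    intro lo hi hsort hmem
    have hs := hmem s (List.mem_cons_self)
    have hmem' : ∀ s' ∈ l', s < s' ∧ s' < hi := by
      intro s' hs'
      exact ⟨(List.pairwise_cons.1 hsort).1 s' hs', (hmem s' (List.mem_cons_of_mem _ hs')).2⟩
    have hIH := IH s hi (List.pairwise_cons.1 hsort).2 hmem'
    simp only [List.cons_append, List.zipWith_cons_cons, List.prod_cons, fvQ]
    calc (hi - lo).choose (s - lo) * fvQ s hi l' *
          ((s - lo).factorial *
            ((l' ++ [hi]).zipWith (fun b a => (b - a).factorial) (s :: l')).prod)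
        = (hi - lo).choose (s - lo) * (s - lo).factorial *
          (fvQ s hi l' * ((l' ++ [hi]).zipWith (fun b a => (b - a).factorial) (s :: l')).prod) := by
          ring
      _ = (hi - lo).choose (s - lo) * (s - lo).factorial * (hi - s).factorial := by rw [hIH]
      _ = (hi - lo).factorial := by
          rw [show hi - s = (hi - lo) - (s - lo) by omega]
          exact Nat.choose_mul_factorial_mul_factorial (by omega)

lemma fv_alphaMulti_eq (n : ℕ) (S : Finset ℕ) (hS : ∀ s ∈ S, 0 < s ∧ s < n) :
    alphaMulti n S = fvQ 0 n (S.sort (· ≤ ·)) := by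
  have hsort := (Finset.sortedLT_sort S).pairwise
  have hmem : ∀ s ∈ S.sort (· ≤ ·), 0 < s ∧ s < n :=
    fun s hs => hS s ((Finset.mem_sort _).1 hs)
  have hQD := fv_Q_mul (S.sort (· ≤ ·)) 0 n hsort hmem
  unfold alphaMulti
  rw [show n.factorial = (n - 0).factorial by norm_num, ← hQD]
  exact Nat.mul_div_cancel _ (fv_denom_pos _ _ _)

end FV5
section FV6

variable [Lattice α] [GradeMinOrder ℕ α]

lemma fv_cycle_cancel {K : Type*} [Field K] {s : Set α} {k lo : ℕ}
    (z : SimpChains K s (k + 1)) (hz : simpBoundary K s k z = 0)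
    (hfull : ∀ σ ∈ z.support, ∀ i : Fin (k + 1),
      grade ℕ ((σ : OrderedSimplex s (k + 1)).1 i) = lo + 1 + (i : ℕ))
    {σ : OrderedSimplex s (k + 1)} (hσ : σ ∈ z.support) (j : Fin (k + 1)) :
    ∃ σ' ∈ z.support, σ'.1 ∘ j.succAbove = σ.1 ∘ j.succAbove ∧ σ'.1 j ≠ σ.1 j := by
  by_contra hcon
  push_neg at hcon
  have huniq : ∀ σ'' ∈ z.support, ∀ i : Fin (k + 1),
      σ''.face i = σ.face j → σ'' = σ ∧ i = j := by
    intro σ'' h'' i hface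
    have hv : σ''.1 ∘ i.succAbove = σ.1 ∘ j.succAbove := congrArg Subtype.val hface
    have hij : i = j := by
      have hpt : ∀ l : Fin k, i.succAbove l = j.succAbove l := by
        intro l
        have h1 := hfull σ'' h'' (i.succAbove l)
        have h2 := hfull σ hσ (j.succAbove l)
        have h3 : σ''.1 (i.succAbove l) = σ.1 (j.succAbove l) := congrFun hv l
        rw [h3] at h1
        exact Fin.ext (by omega)
      exact Fin.succAbove_left_injective (funext hpt)
    subst hij
    have hval : σ''.1 i = σ.1 i := hcon σ'' h'' hv
    refine ⟨Subtype.ext (funext fun l => ?_), rfl⟩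
    rcases eq_or_ne l i with rfl | hne
    · exact hval
    · obtain ⟨l', hl'⟩ := Fin.exists_succAbove_eq hne
      rw [← hl']
      exact congrFun hv l'
  have heval : (simpBoundary K s k z) (σ.face j) = (-1 : K) ^ (j : ℕ) * z σ := by
    rw [simpBoundary, Finsupp.lsum_apply, Finsupp.sum_apply, Finsupp.sum]
    rw [Finset.sum_eq_single σ]
    · rw [LinearMap.sum_apply, Finset.sum_apply']
      rw [Finset.sum_eq_single j]
      · simp only [LinearMap.smul_apply, Finsupp.lsingle_apply, Finsupp.smul_apply,
          smul_eq_mul, Finsupp.single_eq_same]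
      · intro i _ hne
        simp only [LinearMap.smul_apply, Finsupp.lsingle_apply, Finsupp.smul_apply,
          smul_eq_mul]
        rw [Finsupp.single_eq_of_ne' (fun h => hne (huniq σ hσ i h).2), mul_zero]
      · intro h
        exact absurd (Finset.mem_univ j) h
    · intro σ'' h'' hne
      rw [LinearMap.sum_apply, Finset.sum_apply']
      refine Finset.sum_eq_zero (fun i _ => ?_)
      simp only [LinearMap.smul_apply, Finsupp.lsingle_apply, Finsupp.smul_apply,
        smul_eq_mul]
      rw [Finsupp.single_eq_of_ne' (fun h => hne (huniq σ'' h'' i h).1), mul_zero]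
    · intro h
      exact absurd hσ h
  rw [hz, Finsupp.zero_apply] at heval
  have h1 : z σ ≠ 0 := Finsupp.mem_support_iff.1 hσ
  have h2 : ((-1 : K) ^ (j : ℕ)) ≠ 0 := pow_ne_zero _ (neg_ne_zero.2 one_ne_zero)
  exact mul_ne_zero h2 h1 heval.symm

lemma fv_initial_web [DecidableEq α] {K : Type*} [Field K] {b tp : α} {k : ℕ}
    (hgap : grade ℕ tp = grade ℕ b + (k + 2))
    (z : SimpChains K (Set.Ioo b tp) (k + 1)) (hz : simpBoundary K (Set.Ioo b tp) k z = 0)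
    (hz0 : z ≠ 0) :
    FVWeb b tp {C | ∃ σ ∈ z.support, C = Finset.image σ.1 Finset.univ} := by
  have hfull : ∀ σ ∈ z.support, ∀ i : Fin (k + 1),
      grade ℕ ((σ : OrderedSimplex (Set.Ioo b tp) (k + 1)).1 i) = grade ℕ b + 1 + (i : ℕ) := by
    intro σ hσ
    apply fv_seq_grades (fun i => grade ℕ (σ.1 i)) (grade_strictMono.comp σ.2.1)
    intro i
    have hmem := σ.2.2 i
    have hub := grade_strictMono (𝕆 := ℕ) hmem.2
    exact ⟨grade_strictMono hmem.1, by omega⟩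
  refine ⟨?_, ?_, ?_⟩
  · obtain ⟨σ, hσ⟩ := Finsupp.support_nonempty_iff.2 hz0
    exact ⟨_, σ, hσ, rfl⟩
  · rintro C ⟨σ, hσ, rfl⟩
    refine ⟨?_, ?_, ?_⟩
    · intro xx hx yy hy hne
      simp only [coe_image, Set.mem_image, mem_coe, coe_univ, Set.image_univ,
        Set.mem_range] at hx hy
      obtain ⟨i, rfl⟩ := hx
      obtain ⟨l, rfl⟩ := hy
      rcases lt_trichotomy i l with h | h | h
      · exact Or.inl (σ.2.1 h).le
      · subst h; exact absurd rfl hne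
      · exact Or.inr (σ.2.1 h).le
    · intro w hw
      simp only [coe_image, Set.mem_image, mem_coe, coe_univ, Set.image_univ,
        Set.mem_range] at hw
      obtain ⟨i, rfl⟩ := hw
      exact σ.2.2 i
    · rw [Finset.image_image]
      ext r
      simp only [mem_image, mem_univ, true_and, mem_Ioo, Function.comp]
      constructor
      · rintro ⟨i, rfl⟩
        rw [hfull σ hσ i]
        have := i.2
        omega
      · intro hr
        refine ⟨⟨r - grade ℕ b - 1, by omega⟩, ?_⟩
        rw [hfull σ hσ]
        simp only
        omega
  · rintro C ⟨σ, hσ, rfl⟩ u hu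
    obtain ⟨j, _, hju⟩ := mem_image.1 hu
    subst hju
    obtain ⟨σ', hσ', hface, hne⟩ := fv_cycle_cancel (lo := grade ℕ b) z hz hfull hσ j
    refine ⟨σ'.1 j, hne, σ', hσ', ?_⟩
    ext w
    simp only [mem_insert, mem_erase, mem_image, mem_univ, true_and]
    constructor
    · rintro (rfl | ⟨hwu, i, rfl⟩)
      · exact ⟨j, rfl⟩
      · have hij : i ≠ j := fun h => hwu (by rw [h])
        obtain ⟨l', hl'⟩ := Fin.exists_succAbove_eq hij
        refine ⟨j.succAbove l', ?_⟩
        rw [show σ'.1 (j.succAbove l') = σ.1 (j.succAbove l') from congrFun hface l', hl']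
    · rintro ⟨i, rfl⟩
      rcases eq_or_ne i j with rfl | hij
      · exact Or.inl rfl
      · obtain ⟨l', hl'⟩ := Fin.exists_succAbove_eq hij
        have h2 : σ'.1 i = σ.1 i := by
          rw [← hl']
          exact congrFun hface l'
        refine Or.inr ⟨?_, ⟨i, h2.symm⟩⟩
        intro h
        rw [h2] at h
        exact hij (σ.2.1.injective h)

end FV6

lemma fv_properPart_eq (β : Type*) [PartialOrder β] [BoundedOrder β] :
    properPart β = Set.Ioo (⊥ : β) (⊤ : β) := by
  ext x
  simp only [properPart, Set.mem_setOf_eq, Set.mem_Ioo]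
  constructor
  · rintro ⟨h1, h2⟩
    exact ⟨h1.bot_lt, h2.lt_top⟩
  · rintro ⟨h1, h2⟩
    exact ⟨h1.ne', h2.ne⟩


/-- **Corollary 1.2.**  The barycentric subdivision of the `(n-1)`-simplex minimizes
the `f`-vector: if `L` is a finite graded lattice of rank `n` whose proper part has
nonzero reduced homology `H̃_{n-2}` over `K`, then for every `i` the number of
`i`-dimensional faces of `Δ(L̄)` (that is, of `(i+1)`-element chains in `L̄`) is at
least `∑_{S ⊆ [n-1], |S| = i+1} α_n(S)`. -/
theorem f_vector_lower_bound
    (n : ℕ) (hn : 1 ≤ n)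
    (α : Type*) [Lattice α] [BoundedOrder α] [Fintype α] [GradeMinOrder ℕ α]
    (hrank : grade ℕ (⊤ : α) = n)
    (K : Type*) [Field K]
    (hH : Nontrivial (ReducedHomology K (properPart α) (n - 1)))
    (i : ℕ) :
    ∑ S ∈ (Finset.Icc 1 (n - 1)).powerset.filter (fun S => S.card = i + 1), alphaMulti n S
      ≤ Nat.card {C : Finset α // C.card = i + 1 ∧ IsChain (· ≤ ·) (C : Set α) ∧
          ↑C ⊆ properPart α} := by
  classical
  rcases eq_or_lt_of_le hn with h1 | h2
  · -- n = 1 : the left-hand side is zero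
    have hfe : (Finset.Icc 1 (n - 1)).powerset.filter (fun S => S.card = i + 1) = ∅ := by
      rw [← h1]
      apply Finset.filter_false_of_mem
      intro S hS
      have : S = ∅ := by
        have := Finset.mem_powerset.1 hS
        simpa using this
      subst this
      simp
    rw [hfe]
    simp
  · -- n ≥ 2
    obtain ⟨N, rfl⟩ : ∃ N, n = N + 2 := ⟨n - 2, by omega⟩
    have hb0 : grade ℕ (⊥ : α) = 0 := by
      have h := (isMin_bot (α := α)).grade ℕ
      have := h.eq_bot
      simpa using this
    have hpp := fv_properPart_eq α
    rw [hpp] at hH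
    rw [hpp]
    have hNred : N + 2 - 1 = N + 1 := rfl
    rw [hNred] at hH
    -- extract a nonzero top cycle
    have hcyc : ∃ z : SimpChains K (Set.Ioo (⊥ : α) ⊤) (N + 1),
        (simpBoundary K (Set.Ioo (⊥ : α) ⊤) N) z = 0 ∧ z ≠ 0 := by
      by_contra hcon
      push_neg at hcon
      have hsub : Subsingleton ↥(simpCycles K (Set.Ioo (⊥ : α) ⊤) (N + 1)) := by
        constructor
        rintro ⟨z1, hz1⟩ ⟨z2, hz2⟩
        have h1 : (simpBoundary K (Set.Ioo (⊥ : α) ⊤) N) z1 = 0 := hz1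
        have h2 : (simpBoundary K (Set.Ioo (⊥ : α) ⊤) N) z2 = 0 := hz2
        have e1 : z1 = 0 := by
          by_contra he
          exact he (hcon z1 h1)
        have e2 : z2 = 0 := by
          by_contra he
          exact he (hcon z2 h2)
        exact Subtype.ext (show z1 = z2 by rw [e1, e2])
      have : Subsingleton (ReducedHomology K (Set.Ioo (⊥ : α) ⊤) (N + 1)) := by
        unfold ReducedHomology
        haveI := hsub
        exact (Submodule.mkQ_surjective _).subsingleton
      exact absurd hH (not_nontrivial_iff_subsingleton.2 this)
    obtain ⟨z, hzc, hz0⟩ := hcyc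
    have hgap : grade ℕ (⊤ : α) = grade ℕ (⊥ : α) + (N + 2) := by
      rw [hb0, hrank]
      omega
    have hW := fv_initial_web hgap z hzc hz0
    -- per-S inequality and summation
    have hT : ({C : Finset α | C.card = i + 1 ∧ IsChain (· ≤ ·) (C : Set α) ∧
        (C : Set α) ⊆ Set.Ioo (⊥ : α) ⊤}).Finite := Set.toFinite _
    have hperS : ∀ S ∈ (Finset.Icc 1 (N + 2 - 1)).powerset.filter (fun S => S.card = i + 1),
        alphaMulti (N + 2) S ≤ (fvChains (⊥ : α) ⊤ S).ncard := by
      intro S hS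
      rw [Finset.mem_filter, Finset.mem_powerset] at hS
      have hbounds : ∀ s ∈ S, 0 < s ∧ s < N + 2 := by
        intro s hs
        have := hS.1 hs
        rw [Finset.mem_Icc] at this
        omega
      have h1 : alphaMulti (N + 2) S = fvQ 0 (N + 2) (S.sort (· ≤ ·)) :=
        fv_alphaMulti_eq (N + 2) S hbounds
      have h2 := fv_flag_count (α := α) ⊤ (S.sort (· ≤ ·)) (Finset.sortedLT_sort S).pairwise ⊥ _ hW
        (by
          intro s hs
          have := hbounds s ((Finset.mem_sort _).1 hs)
          rw [hb0, hrank]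
          exact this)
      rw [hb0, hrank, Finset.sort_toFinset] at h2
      rw [h1]
      exact h2
    have hsum := fv_sum_ncard_le
      ((Finset.Icc 1 (N + 2 - 1)).powerset.filter (fun S => S.card = i + 1))
      (fun S => fvChains (⊥ : α) ⊤ S)
      ({C : Finset α | C.card = i + 1 ∧ IsChain (· ≤ ·) (C : Set α) ∧
        (C : Set α) ⊆ Set.Ioo (⊥ : α) ⊤}) hT
      (by
        intro S hS C hC
        rw [Finset.mem_filter] at hS
        obtain ⟨hch, hsubI, him⟩ := hC
        refine ⟨?_, hch, hsubI⟩
        rw [← hS.2, ← him]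
        exact (Finset.card_image_of_injOn (fv_grade_injOn_chain hch)).symm
      )
      (by
        intro S hS S' hS' hne
        rw [Set.disjoint_left]
        rintro C ⟨_, _, him⟩ ⟨_, _, him'⟩
        exact hne (him ▸ him'))
    have hfinal : Nat.card {C : Finset α // C.card = i + 1 ∧ IsChain (· ≤ ·) (C : Set α) ∧
        (C : Set α) ⊆ Set.Ioo (⊥ : α) ⊤} =
        ({C : Finset α | C.card = i + 1 ∧ IsChain (· ≤ ·) (C : Set α) ∧
          (C : Set α) ⊆ Set.Ioo (⊥ : α) ⊤}).ncard := Nat.card_coe_set_eq _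
    rw [hfinal]
    calc ∑ S ∈ (Finset.Icc 1 (N + 2 - 1)).powerset.filter (fun S => S.card = i + 1),
          alphaMulti (N + 2) S
        ≤ ∑ S ∈ (Finset.Icc 1 (N + 2 - 1)).powerset.filter (fun S => S.card = i + 1),
          (fvChains (⊥ : α) ⊤ S).ncard := Finset.sum_le_sum hperS
      _ ≤ _ := hsum
end
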